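/- arXiv:1512.07449 — 9 statements merged into one kernel-verified Lean document; each statement's English description precedes it below -/
import Mathlib

section
/- Let V : ℝ → ℝ be continuous on the compact interval [A₁, B₁] and f : ℝ → ℝ be continuous on the compact interval [A₂, B₂], with A₁ ≤ B₁ and A₂ ≤ B₂. Then the superposition (V ⊞ f), defined on [A₁ + A₂, B₁ + B₂] by (V ⊞ f)(q) = inf { V(x) + f(y) : x ∈ [A₁, B₁], y ∈ [A₂, B₂], x + y = q }, is continuous on [A₁ + A₂, B₁ + B₂] (and the infimum is attained for every q in this interval). -/
open Set

lemma shift_aux (A₁ B₁ A₂ B₂ : ℝ) (q q' x y : ℝ)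
    (hq' : q' ∈ Icc (A₁+A₂) (B₁+B₂))
    (hx : x ∈ Icc A₁ B₁) (hy : y ∈ Icc A₂ B₂) (hxy : x + y = q) :
    ∃ x' ∈ Icc A₁ B₁, ∃ y' ∈ Icc A₂ B₂, x' + y' = q' ∧
      |x' - x| ≤ |q' - q| ∧ |y' - y| ≤ |q' - q| := by
  obtain ⟨hx1, hx2⟩ := hx
  obtain ⟨hy1, hy2⟩ := hy
  obtain ⟨hq1, hq2⟩ := hq'
  rcases le_total q q' with h | h
  · have habs : |q' - q| = q' - q := abs_of_nonneg (by linarith)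
    rcases le_total (x + (q' - q)) B₁ with h' | h'
    · exact ⟨x + (q' - q), ⟨by linarith, h'⟩, y, ⟨hy1, hy2⟩, by linarith,
        by rw [habs]; rw [show x + (q' - q) - x = q' - q by ring, abs_of_nonneg (by linarith)],
        by rw [habs]; simp; linarith⟩
    · exact ⟨B₁, ⟨by linarith, by linarith⟩, q' - B₁, ⟨by linarith, by linarith⟩,
        by ring, by rw [habs, abs_of_nonneg (by linarith)]; linarith,
        by rw [habs, abs_of_nonneg (by linarith)]; linarith⟩
  · have habs : |q' - q| = q - q' := by rw [abs_sub_comm]; exact abs_of_nonneg (by linarith)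
    rcases le_total A₁ (x + (q' - q)) with h' | h'
    · exact ⟨x + (q' - q), ⟨h', by linarith⟩, y, ⟨hy1, hy2⟩, by linarith,
        by rw [habs, show x + (q' - q) - x = q' - q by ring, abs_of_nonpos (by linarith)]; linarith,
        by rw [habs]; simp; linarith⟩
    · exact ⟨A₁, ⟨le_refl _, by linarith⟩, q' - A₁, ⟨by linarith, by linarith⟩,
        by ring, by rw [habs, abs_of_nonpos (by linarith)]; linarith,
        by rw [habs, abs_of_nonpos (by linarith)]; linarith⟩

/-- If `V` is continuous on the compact interval `[A₁, B₁]` and `f` is continuous on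
`[A₂, B₂]` (both nonempty), then the superposition
`q ↦ inf { V x + f y : x ∈ [A₁,B₁], y ∈ [A₂,B₂], x + y = q }` is continuous on
`[A₁ + A₂, B₁ + B₂]`, and the infimum is attained for every `q` in this interval. -/
theorem stmt_3 (A₁ B₁ A₂ B₂ : ℝ) (h₁ : A₁ ≤ B₁) (h₂ : A₂ ≤ B₂) (V f : ℝ → ℝ)
    (hV : ContinuousOn V (Set.Icc A₁ B₁)) (hf : ContinuousOn f (Set.Icc A₂ B₂)) :
    ContinuousOn
      (fun q => sInf {z | ∃ x ∈ Set.Icc A₁ B₁, ∃ y ∈ Set.Icc A₂ B₂,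
        x + y = q ∧ z = V x + f y})
      (Set.Icc (A₁ + A₂) (B₁ + B₂)) ∧
    ∀ q ∈ Set.Icc (A₁ + A₂) (B₁ + B₂), ∃ x ∈ Set.Icc A₁ B₁, ∃ y ∈ Set.Icc A₂ B₂,
      x + y = q ∧
      V x + f y = sInf {z | ∃ x' ∈ Set.Icc A₁ B₁, ∃ y' ∈ Set.Icc A₂ B₂,
        x' + y' = q ∧ z = V x' + f y'} := by
  set S : ℝ → Set ℝ := fun q =>
    {z | ∃ x ∈ Set.Icc A₁ B₁, ∃ y ∈ Set.Icc A₂ B₂, x + y = q ∧ z = V x + f y} with hSdef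
  set s := Set.Icc (A₁ + A₂) (B₁ + B₂) with hsdef
  -- minimizer with minimality
  have key : ∀ q ∈ s, ∃ x ∈ Set.Icc A₁ B₁, ∃ y ∈ Set.Icc A₂ B₂,
      x + y = q ∧ V x + f y = sInf (S q) ∧ ∀ z ∈ S q, V x + f y ≤ z := by
    intro q hq
    set T : Set (ℝ × ℝ) :=
      (Set.Icc A₁ B₁ ×ˢ Set.Icc A₂ B₂) ∩ {p | p.1 + p.2 = q} with hTdef
    have hTc : IsCompact T :=
      (isCompact_Icc.prod isCompact_Icc).inter_right
        (isClosed_eq (continuous_fst.add continuous_snd) continuous_const)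
    have hTne : T.Nonempty := by
      obtain ⟨x', hx', y', hy', hsum, -⟩ :=
        shift_aux A₁ B₁ A₂ B₂ (A₁ + A₂) q A₁ A₂ hq
          ⟨le_refl _, h₁⟩ ⟨le_refl _, h₂⟩ rfl
      exact ⟨(x', y'), ⟨⟨hx', hy'⟩, hsum⟩⟩
    have hg : ContinuousOn (fun p : ℝ × ℝ => V p.1 + f p.2) T := by
      apply ContinuousOn.add
      · exact hV.comp continuous_fst.continuousOn fun p hp => hp.1.1
      · exact hf.comp continuous_snd.continuousOn fun p hp => hp.1.2
    obtain ⟨p, hpT, hpmin⟩ := hTc.exists_isMinOn hTne hg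
    have hmem : V p.1 + f p.2 ∈ S q := ⟨p.1, hpT.1.1, p.2, hpT.1.2, hpT.2, rfl⟩
    have hlb : ∀ z ∈ S q, V p.1 + f p.2 ≤ z := by
      rintro z ⟨x, hx, y, hy, hxy, rfl⟩
      exact hpmin (show (x, y) ∈ T from ⟨⟨hx, hy⟩, hxy⟩)
    refine ⟨p.1, hpT.1.1, p.2, hpT.1.2, hpT.2, ?_, hlb⟩
    exact le_antisymm (le_csInf ⟨_, hmem⟩ hlb) (csInf_le ⟨_, hlb⟩ hmem)
  constructor
  · -- continuity
    have uV := isCompact_Icc.uniformContinuousOn_of_continuous hV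
    have uf := isCompact_Icc.uniformContinuousOn_of_continuous hf
    rw [Metric.uniformContinuousOn_iff] at uV uf
    rw [Metric.continuousOn_iff]
    intro q hq ε hε
    obtain ⟨δ₁, hδ₁, hV'⟩ := uV (ε / 2) (by linarith)
    obtain ⟨δ₂, hδ₂, hf'⟩ := uf (ε / 2) (by linarith)
    refine ⟨min δ₁ δ₂, lt_min hδ₁ hδ₂, fun q' hq' hd => ?_⟩
    have main : ∀ a ∈ s, ∀ b ∈ s, dist a b < min δ₁ δ₂ →
        sInf (S a) < sInf (S b) + ε := by
      intro a ha b hb hab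
      obtain ⟨x, hx, y, hy, hxy, heq, -⟩ := key b hb
      obtain ⟨x', hx', y', hy', hsum, hdx, hdy⟩ :=
        shift_aux A₁ B₁ A₂ B₂ b a x y ha hx hy hxy
      obtain ⟨x₀, hx₀, y₀, hy₀, -, heq', hlb'⟩ := key a ha
      have h1 : sInf (S a) ≤ V x' + f y' := by
        rw [← heq']; exact hlb' _ ⟨x', hx', y', hy', hsum, rfl⟩
      have hdab : |a - b| < min δ₁ δ₂ := by rwa [Real.dist_eq] at hab
      have hVd : dist (V x') (V x) < ε / 2 :=
        hV' x' hx' x hx (by rw [Real.dist_eq]; exact hdx.trans_lt (hdab.trans_le (min_le_left _ _)))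
      have hfd : dist (f y') (f y) < ε / 2 :=
        hf' y' hy' y hy (by rw [Real.dist_eq]; exact hdy.trans_lt (hdab.trans_le (min_le_right _ _)))
      rw [Real.dist_eq] at hVd hfd
      obtain ⟨hVd1, hVd2⟩ := abs_sub_lt_iff.mp hVd
      obtain ⟨hfd1, hfd2⟩ := abs_sub_lt_iff.mp hfd
      calc sInf (S a) ≤ V x' + f y' := h1
        _ < V x + f y + ε := by linarith
        _ = sInf (S b) + ε := by rw [heq]
    have m1 := main q' hq' q hq hd
    have m2 := main q hq q' hq' (by rwa [dist_comm])
    rw [Real.dist_eq, abs_sub_lt_iff]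
    constructor
    · show sInf (S q') - sInf (S q) < ε
      linarith
    · show sInf (S q) - sInf (S q') < ε
      linarith
  · intro q hq
    obtain ⟨x, hx, y, hy, hxy, heq, -⟩ := key q hq
    exact ⟨x, hx, y, hy, hxy, heq⟩
end

section
/- Let V : ℝ → ℝ be continuous and piecewise affine on the compact interval [A₁, B₁] and f : ℝ → ℝ be continuous and piecewise affine on the compact interval [A₂, B₂]. Then the superposition (V ⊞ f), defined on [A₁ + A₂, B₁ + B₂] by (V ⊞ f)(q) = min { V(x) + f(y) : x ∈ [A₁, B₁], y ∈ [A₂, B₂], x + y = q }, is piecewise affine on [A₁ + A₂, B₁ + B₂]. -/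
/-- `h` is piecewise affine on `[A, B]`: there is a finite subdivision
`A = t₀ < t₁ < ⋯ < t_m = B` such that `h` is affine on each subinterval. -/
def PiecewiseAffineOn (h : ℝ → ℝ) (A B : ℝ) : Prop :=
  ∃ m : ℕ, ∃ t : Fin (m + 1) → ℝ, StrictMono t ∧ t 0 = A ∧ t (Fin.last m) = B ∧
    ∀ i : Fin m, ∃ k d : ℝ, ∀ q ∈ Set.Icc (t i.castSucc) (t i.succ), h q = k * q + d

/-- `h` is affine on every "gap" of the finite set `F`. -/
def AffGaps (h : ℝ → ℝ) (F : Finset ℝ) : Prop :=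
  ∀ a ∈ F, ∀ b ∈ F, a < b → (∀ c ∈ F, c ≤ a ∨ b ≤ c) →
    ∃ k d : ℝ, ∀ q ∈ Set.Icc a b, h q = k * q + d

/-- Finset-based reformulation of piecewise affinity. -/
def PAF (h : ℝ → ℝ) (A B : ℝ) : Prop :=
  ∃ F : Finset ℝ, A ∈ F ∧ B ∈ F ∧ ↑F ⊆ Set.Icc A B ∧ AffGaps h F

lemma PAF_trivial (h : ℝ → ℝ) (A : ℝ) : PAF h A A := by
  refine ⟨{A}, by simp, by simp, by simp, ?_⟩
  intro a ha b hb hab _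
  simp only [Finset.mem_singleton] at ha hb
  exact absurd (ha.trans hb.symm ▸ hab) (lt_irrefl b)

lemma PAF_congr {g h : ℝ → ℝ} {A B : ℝ} (hgh : ∀ q ∈ Set.Icc A B, g q = h q)
    (hp : PAF h A B) : PAF g A B := by
  obtain ⟨F, hA, hB, hF, hgaps⟩ := hp
  refine ⟨F, hA, hB, hF, ?_⟩
  intro a ha b hb hab hgap
  obtain ⟨k, d, hk⟩ := hgaps a ha b hb hab hgap
  refine ⟨k, d, fun q hq => ?_⟩
  have haq : a ∈ Set.Icc A B := hF ha
  have hbq : b ∈ Set.Icc A B := hF hb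
  rw [hgh q ⟨le_trans haq.1 hq.1, le_trans hq.2 hbq.2⟩]
  exact hk q hq

/-- `h` is affine on any interval whose interior avoids `F`, as long as the
interval sits between an element of `F` below and one above. -/
lemma AffGaps.bracket {h : ℝ → ℝ} {F : Finset ℝ} (hg : AffGaps h F)
    {A B u v : ℝ} (hA : A ∈ F) (hB : B ∈ F) (hAu : A ≤ u) (huv : u < v) (hvB : v ≤ B)
    (hfree : ∀ c ∈ F, ¬(u < c ∧ c < v)) :
    ∃ k d : ℝ, ∀ q ∈ Set.Icc u v, h q = k * q + d := by
  classical
  set s₁ : Finset ℝ := F.filter (fun x => x ≤ u) with hs₁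
  set s₂ : Finset ℝ := F.filter (fun x => v ≤ x) with hs₂
  have hs₁ne : s₁.Nonempty := ⟨A, Finset.mem_filter.2 ⟨hA, hAu⟩⟩
  have hs₂ne : s₂.Nonempty := ⟨B, Finset.mem_filter.2 ⟨hB, hvB⟩⟩
  set a := s₁.max' hs₁ne with ha
  set b := s₂.min' hs₂ne with hb
  have haF : a ∈ F := (Finset.mem_filter.1 (s₁.max'_mem hs₁ne)).1
  have hbF : b ∈ F := (Finset.mem_filter.1 (s₂.min'_mem hs₂ne)).1
  have hau : a ≤ u := (Finset.mem_filter.1 (s₁.max'_mem hs₁ne)).2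
  have hvb : v ≤ b := (Finset.mem_filter.1 (s₂.min'_mem hs₂ne)).2
  have hab : a < b := lt_of_le_of_lt hau (lt_of_lt_of_le huv hvb)
  have hgap : ∀ c ∈ F, c ≤ a ∨ b ≤ c := by
    intro c hc
    rcases le_or_gt c u with h1 | h1
    · exact Or.inl (Finset.le_max' s₁ c (Finset.mem_filter.2 ⟨hc, h1⟩))
    rcases le_or_gt v c with h2 | h2
    · exact Or.inr (Finset.min'_le s₂ c (Finset.mem_filter.2 ⟨hc, h2⟩))
    exact absurd ⟨h1, h2⟩ (hfree c hc)
  obtain ⟨k, d, hk⟩ := hg a haF b hbF hab hgap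
  exact ⟨k, d, fun q hq => hk q ⟨le_trans hau hq.1, le_trans hq.2 hvb⟩⟩

/-- Gluing two PAF's. -/
lemma PAF.glue {h : ℝ → ℝ} {A c B : ℝ} (h₁ : PAF h A c) (h₂ : PAF h c B)
    (hAc : A ≤ c) (hcB : c ≤ B) : PAF h A B := by
  obtain ⟨F₁, hA1, hc1, hF1, hg1⟩ := h₁
  obtain ⟨F₂, hc2, hB2, hF2, hg2⟩ := h₂
  refine ⟨F₁ ∪ F₂, Finset.mem_union_left _ hA1, Finset.mem_union_right _ hB2, ?_, ?_⟩
  · intro x hx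
    rcases Finset.mem_union.1 (by exact_mod_cast hx) with hx | hx
    · exact ⟨(hF1 hx).1, le_trans (hF1 hx).2 hcB⟩
    · exact ⟨le_trans hAc (hF2 hx).1, (hF2 hx).2⟩
  intro a ha b hb hab hgap
  rcases Finset.mem_union.1 ha with ha' | ha' <;> rcases Finset.mem_union.1 hb with hb' | hb'
  · -- both in F₁
    refine hg1 a ha' b hb' hab (fun x hx => hgap x (Finset.mem_union_left _ hx))
  · -- a ∈ F₁, b ∈ F₂.  If b = c then both in F₁; if b > c then c is in the gap unless a ≥ c...
    rcases eq_or_lt_of_le (hF2 hb').1 with hbc | hbc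
    · exact hg1 a ha' b (hbc ▸ hc1) hab (fun x hx => hgap x (Finset.mem_union_left _ hx))
    · -- c < b; also a ≤ c (a ∈ F₁).  gap condition with c: c ≤ a ∨ b ≤ c.
      rcases hgap c (Finset.mem_union_left _ hc1) with hca | hbc'
      · -- c ≤ a so a = c, both in F₂
        have hac : a = c := le_antisymm (hF1 ha').2 hca
        exact hg2 a (hac ▸ hc2) b hb' hab (fun x hx => hgap x (Finset.mem_union_right _ hx))
      · exact absurd hbc (not_lt.2 hbc')
  · -- a ∈ F₂, b ∈ F₁ : then a ≥ c and b ≤ c so a = c ... b ≤ c ≤ a < b contradiction unless...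
    have h1 : c ≤ a := (hF2 ha').1
    have h2 : b ≤ c := (hF1 hb').2
    exact absurd (lt_of_lt_of_le hab (le_trans h2 h1)) (lt_irrefl a)
  · exact hg2 a ha' b hb' hab (fun x hx => hgap x (Finset.mem_union_right _ hx))

/-- PAF from two (possibly degenerate) affine pieces. -/
lemma PAF_two_pieces {h : ℝ → ℝ} {A c B : ℝ} (hAB : A ≤ B) (hc : c ∈ Set.Icc A B)
    (h₁ : ∃ k d : ℝ, ∀ q ∈ Set.Icc A c, h q = k * q + d)
    (h₂ : ∃ k d : ℝ, ∀ q ∈ Set.Icc c B, h q = k * q + d) : PAF h A B := by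
  classical
  refine ⟨{A, c, B}, by simp, by simp, ?_, ?_⟩
  · intro x hx
    simp only [Finset.coe_insert, Finset.coe_singleton, Set.mem_insert_iff,
      Set.mem_singleton_iff] at hx
    rcases hx with rfl | rfl | rfl
    · exact ⟨le_refl _, hAB⟩
    · exact hc
    · exact ⟨hAB, le_refl _⟩
  intro a ha b hb hab hgap
  simp only [Finset.mem_insert, Finset.mem_singleton] at ha hb
  have hcgap := hgap c (by simp)
  rcases ha with rfl | rfl | rfl <;> rcases hb with rfl | rfl | rfl
  · exact absurd hab (lt_irrefl _)
  · exact h₁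
  · -- gap (A, B): c ≤ A or B ≤ c, so c = A or c = B
    rcases hcgap with h' | h'
    · have : c = a := le_antisymm h' hc.1
      obtain ⟨k, d, hk⟩ := h₂
      exact ⟨k, d, fun q hq => hk q ⟨this ▸ hq.1, hq.2⟩⟩
    · have : c = b := le_antisymm hc.2 h'
      obtain ⟨k, d, hk⟩ := h₁
      exact ⟨k, d, fun q hq => hk q ⟨hq.1, this ▸ hq.2⟩⟩
  · exact absurd (lt_of_lt_of_le hab hc.1) (not_lt.2 (le_refl _))
  · exact absurd hab (lt_irrefl _)
  · exact h₂
  · exact absurd (lt_of_lt_of_le hab hAB) (not_lt.2 (le_refl _))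
  · exact absurd (lt_of_lt_of_le hab hc.2) (not_lt.2 (le_refl _))
  · exact absurd hab (lt_irrefl _)

/-- min of two affine functions, in the case `k₁ ≤ k₂`. -/
lemma affine_min_split_le {A B k₁ d₁ k₂ d₂ : ℝ} (hAB : A ≤ B) (hk : k₁ ≤ k₂) :
    PAF (fun q => min (k₁ * q + d₁) (k₂ * q + d₂)) A B := by
  rcases eq_or_lt_of_le hk with hkk | hkk
  · refine PAF_two_pieces hAB ⟨le_refl A, hAB⟩ ⟨k₁, min d₁ d₂, fun q _ => ?_⟩
      ⟨k₁, min d₁ d₂, fun q _ => ?_⟩ <;>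
    · rw [← hkk]; rw [min_add_add_left]
  · set c₀ := (d₁ - d₂) / (k₂ - k₁) with hc₀
    have hkpos : 0 < k₂ - k₁ := sub_pos.2 hkk
    have key : ∀ q : ℝ, (k₂ * q + d₂) - (k₁ * q + d₁) = (k₂ - k₁) * (q - c₀) := by
      intro q
      rw [hc₀]
      field_simp [hkpos.ne']
      ring
    have hle : ∀ q, q ≤ c₀ → min (k₁ * q + d₁) (k₂ * q + d₂) = k₂ * q + d₂ := by
      intro q hq
      apply min_eq_right
      have := key q
      nlinarith [mul_nonpos_of_nonneg_of_nonpos (le_of_lt hkpos) (sub_nonpos.2 hq)]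
    have hge : ∀ q, c₀ ≤ q → min (k₁ * q + d₁) (k₂ * q + d₂) = k₁ * q + d₁ := by
      intro q hq
      apply min_eq_left
      nlinarith [mul_nonneg (le_of_lt hkpos) (sub_nonneg.2 hq), key q]
    refine PAF_two_pieces hAB (c := max A (min c₀ B)) ⟨le_max_left _ _, max_le hAB (min_le_right _ _)⟩ ?_ ?_
    · rcases le_or_gt A c₀ with hA | hA
      · refine ⟨k₂, d₂, fun q hq => hle q ?_⟩
        have : max A (min c₀ B) ≤ c₀ := max_le hA (min_le_left _ _)
        exact le_trans hq.2 this
      · refine ⟨k₁, d₁, fun q hq => hge q ?_⟩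
        exact le_trans (le_of_lt hA) hq.1
    · rcases le_or_gt c₀ B with hB | hB
      · refine ⟨k₁, d₁, fun q hq => hge q ?_⟩
        have : c₀ ≤ max A (min c₀ B) := le_max_of_le_right (le_min (le_refl _) hB)
        exact le_trans this hq.1
      · refine ⟨k₂, d₂, fun q hq => hle q ?_⟩
        have : max A (min c₀ B) = B := by
          rw [min_eq_right (le_of_lt hB), max_eq_right hAB]
        rw [this] at hq; exact le_trans hq.2 (le_of_lt hB)

lemma affine_min_PAF {g h : ℝ → ℝ} {A B k₁ d₁ k₂ d₂ : ℝ} (hAB : A ≤ B)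
    (hg : ∀ q ∈ Set.Icc A B, g q = k₁ * q + d₁)
    (hh : ∀ q ∈ Set.Icc A B, h q = k₂ * q + d₂) :
    PAF (fun q => min (g q) (h q)) A B := by
  rcases le_total k₁ k₂ with hk | hk
  · exact PAF_congr (fun q hq => by rw [hg q hq, hh q hq]) (affine_min_split_le hAB hk)
  · exact PAF_congr (fun q hq => by rw [hg q hq, hh q hq, min_comm]) (affine_min_split_le hAB hk)

/-- Main closure lemma: the pointwise min of two PAF functions is PAF.
Auxiliary version with a common breakpoint set, by strong induction on its card. -/
lemma min_PAF_aux : ∀ (n : ℕ) (A B : ℝ) (g h : ℝ → ℝ) (F : Finset ℝ),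
    F.card ≤ n → A ∈ F → B ∈ F → ↑F ⊆ Set.Icc A B → AffGaps g F → AffGaps h F →
    PAF (fun q => min (g q) (h q)) A B := by
  classical
  intro n
  induction n with
  | zero =>
    intro A B g h F hcard hA _ _ _ _
    exact absurd (Finset.card_pos.2 ⟨A, hA⟩) (by omega)
  | succ n ih =>
    intro A B g h F hcard hA hB hF hg hh
    have hAB : A ≤ B := (hF (Finset.mem_coe.2 hA)).2
    rcases eq_or_lt_of_le hAB with rfl | hAB'
    · exact PAF_trivial _ _
    by_cases hint : ∃ c ∈ F, A < c ∧ c < B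
    · obtain ⟨c, hcF, hAc, hcB⟩ := hint
      -- restrict to the two halves
      have half : ∀ (a b : ℝ), a ∈ F → b ∈ F → a < b →
          (∀ x ∈ F, a ≤ x → x ≤ b → x ∈ Set.Icc a b) →
          ((insert a (insert b (F.filter (fun x => a ≤ x ∧ x ≤ b)))).card ≤ n) →
          PAF (fun q => min (g q) (h q)) a b := by
        intro a b haF hbF haltb _ hcard'
        set F' := insert a (insert b (F.filter (fun x => a ≤ x ∧ x ≤ b))) with hF'
        have hsub : ∀ x ∈ F', x ∈ Set.Icc a b := by
          intro x hx
          simp only [hF', Finset.mem_insert, Finset.mem_filter] at hx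
          rcases hx with rfl | rfl | ⟨_, h1, h2⟩
          · exact ⟨le_refl _, le_of_lt haltb⟩
          · exact ⟨le_of_lt haltb, le_refl _⟩
          · exact ⟨h1, h2⟩
        have haab : A ≤ a := (hF (Finset.mem_coe.2 haF)).1
        have hbB : b ≤ B := (hF (Finset.mem_coe.2 hbF)).2
        have gaps : ∀ (φ : ℝ → ℝ), AffGaps φ F → AffGaps φ F' := by
          intro φ hφ u huF' v hvF' huv hgap
          refine hφ.bracket hA hB (le_trans haab (hsub u huF').1) huv
            (le_trans (hsub v hvF').2 hbB) ?_
          intro x hxF ⟨hux, hxv⟩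
          have hx' : x ∈ F' := by
            simp only [hF', Finset.mem_insert, Finset.mem_filter]
            exact Or.inr (Or.inr ⟨hxF, le_trans (hsub u huF').1 (le_of_lt hux),
              le_trans (le_of_lt hxv) (hsub v hvF').2⟩)
          rcases hgap x hx' with h' | h'
          · exact absurd hux (not_lt.2 h')
          · exact absurd hxv (not_lt.2 h')
        exact ih a b g h F' hcard'
          (by simp [hF']) (by simp [hF'])
          (fun x hx => hsub x (Finset.mem_coe.1 hx)) (gaps g hg) (gaps h hh)
      have hcard1 : (insert A (insert c (F.filter (fun x => A ≤ x ∧ x ≤ c)))).card ≤ n := by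
        have hsub : insert A (insert c (F.filter (fun x => A ≤ x ∧ x ≤ c))) ⊆ F.erase B := by
          intro x hx
          simp only [Finset.mem_insert, Finset.mem_filter] at hx
          have hxF : x ∈ F ∧ x ≤ c := by
            rcases hx with rfl | rfl | ⟨h1, _, h3⟩
            · exact ⟨hA, le_of_lt hAc⟩
            · exact ⟨hcF, le_refl _⟩
            · exact ⟨h1, h3⟩
          exact Finset.mem_erase.2 ⟨ne_of_lt (lt_of_le_of_lt hxF.2 hcB), hxF.1⟩
        have h1 : (insert A (insert c (F.filter (fun x => A ≤ x ∧ x ≤ c)))).card ≤ (F.erase B).card := Finset.card_le_card hsub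
        have h2 : (F.erase B).card < F.card := Finset.card_erase_lt_of_mem hB
        omega
      have hcard2 : (insert c (insert B (F.filter (fun x => c ≤ x ∧ x ≤ B)))).card ≤ n := by
        have hsub : insert c (insert B (F.filter (fun x => c ≤ x ∧ x ≤ B))) ⊆ F.erase A := by
          intro x hx
          simp only [Finset.mem_insert, Finset.mem_filter] at hx
          have hxF : x ∈ F ∧ c ≤ x := by
            rcases hx with rfl | rfl | ⟨h1, h3, _⟩
            · exact ⟨hcF, le_refl _⟩
            · exact ⟨hB, le_of_lt hcB⟩
            · exact ⟨h1, h3⟩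
          exact Finset.mem_erase.2 ⟨ne_of_gt (lt_of_lt_of_le hAc hxF.2), hxF.1⟩
        have h1 : (insert c (insert B (F.filter (fun x => c ≤ x ∧ x ≤ B)))).card ≤ (F.erase A).card := Finset.card_le_card hsub
        have h2 : (F.erase A).card < F.card := Finset.card_erase_lt_of_mem hA
        omega
      exact (half A c hA hcF hAc (fun x _ h1 h2 => ⟨h1, h2⟩) hcard1).glue
        (half c B hcF hB hcB (fun x _ h1 h2 => ⟨h1, h2⟩) hcard2)
        (le_of_lt hAc) (le_of_lt hcB)
    · push_neg at hint
      have hgap : ∀ x ∈ F, x ≤ A ∨ B ≤ x := by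
        intro x hx
        rcases lt_or_ge A x with h1 | h1
        · exact Or.inr (hint x hx h1)
        · exact Or.inl h1
      obtain ⟨k₁, d₁, hg'⟩ := hg A hA B hB hAB' hgap
      obtain ⟨k₂, d₂, hh'⟩ := hh A hA B hB hAB' hgap
      exact affine_min_PAF hAB hg' hh'

/-- PAF is closed under pointwise min. -/
lemma PAF.min {g h : ℝ → ℝ} {A B : ℝ} (hg : PAF g A B) (hh : PAF h A B) :
    PAF (fun q => min (g q) (h q)) A B := by
  classical
  obtain ⟨F₁, hA1, hB1, hF1, hgaps1⟩ := hg
  obtain ⟨F₂, hA2, hB2, hF2, hgaps2⟩ := hh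
  set F := F₁ ∪ F₂ with hF
  have hFsub : ↑F ⊆ Set.Icc A B := by
    intro x hx
    rcases Finset.mem_union.1 (Finset.mem_coe.1 hx) with hx | hx
    · exact hF1 (Finset.mem_coe.2 hx)
    · exact hF2 (Finset.mem_coe.2 hx)
  have refine' : ∀ (φ : ℝ → ℝ) (F₀ : Finset ℝ), A ∈ F₀ → B ∈ F₀ → F₀ ⊆ F →
      AffGaps φ F₀ → AffGaps φ F := by
    intro φ F₀ hA0 hB0 hsub hφ u huF v hvF huv hgap
    refine hφ.bracket hA0 hB0 (hFsub (Finset.mem_coe.2 huF)).1 huv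
      (hFsub (Finset.mem_coe.2 hvF)).2 ?_
    intro x hxF ⟨hux, hxv⟩
    rcases hgap x (hsub hxF) with h' | h'
    · exact absurd hux (not_lt.2 h')
    · exact absurd hxv (not_lt.2 h')
  exact min_PAF_aux F.card A B g h F (le_refl _) (Finset.mem_union_left _ hA1)
    (Finset.mem_union_right _ hB2) hFsub
    (refine' g F₁ hA1 hB1 Finset.subset_union_left hgaps1)
    (refine' h F₂ hA2 hB2 Finset.subset_union_right hgaps2)

lemma lip_PAF_aux : ∀ (n : ℕ) (A B : ℝ) (h : ℝ → ℝ) (F : Finset ℝ),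
    F.card ≤ n → A ∈ F → B ∈ F → ↑F ⊆ Set.Icc A B → AffGaps h F →
    ∃ L : ℝ, 0 ≤ L ∧ ∀ u ∈ Set.Icc A B, ∀ v ∈ Set.Icc A B, |h u - h v| ≤ L * |u - v| := by
  classical
  intro n
  induction n with
  | zero =>
    intro A B h F hcard hA _ _ _
    exact absurd (Finset.card_pos.2 ⟨A, hA⟩) (by omega)
  | succ n ih =>
    intro A B h F hcard hA hB hF hg
    have hAB : A ≤ B := (hF (Finset.mem_coe.2 hA)).2
    rcases eq_or_lt_of_le hAB with rfl | hAB'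
    · refine ⟨0, le_refl _, fun u hu v hv => ?_⟩
      have : u = v := le_antisymm (hu.2.trans hv.1) (hv.2.trans hu.1)
      simp [this]
    by_cases hint : ∃ c ∈ F, A < c ∧ c < B
    · obtain ⟨c, hcF, hAc, hcB⟩ := hint
      have half : ∀ (a b : ℝ), a ∈ F → b ∈ F → a < b →
          ((insert a (insert b (F.filter (fun x => a ≤ x ∧ x ≤ b)))).card ≤ n) →
          ∃ L : ℝ, 0 ≤ L ∧ ∀ u ∈ Set.Icc a b, ∀ v ∈ Set.Icc a b, |h u - h v| ≤ L * |u - v| := by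
        intro a b haF hbF haltb hcard'
        set F' := insert a (insert b (F.filter (fun x => a ≤ x ∧ x ≤ b))) with hF'
        have hsub : ∀ x ∈ F', x ∈ Set.Icc a b := by
          intro x hx
          simp only [hF', Finset.mem_insert, Finset.mem_filter] at hx
          rcases hx with rfl | rfl | ⟨_, h1, h2⟩
          · exact ⟨le_refl _, le_of_lt haltb⟩
          · exact ⟨le_of_lt haltb, le_refl _⟩
          · exact ⟨h1, h2⟩
        have haab : A ≤ a := (hF (Finset.mem_coe.2 haF)).1
        have hbB : b ≤ B := (hF (Finset.mem_coe.2 hbF)).2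
        have gaps : AffGaps h F' := by
          intro u huF' v hvF' huv hgap
          refine hg.bracket hA hB (le_trans haab (hsub u huF').1) huv
            (le_trans (hsub v hvF').2 hbB) ?_
          intro x hxF ⟨hux, hxv⟩
          have hx' : x ∈ F' := by
            simp only [hF', Finset.mem_insert, Finset.mem_filter]
            exact Or.inr (Or.inr ⟨hxF, le_trans (hsub u huF').1 (le_of_lt hux),
              le_trans (le_of_lt hxv) (hsub v hvF').2⟩)
          rcases hgap x hx' with h' | h'
          · exact absurd hux (not_lt.2 h')
          · exact absurd hxv (not_lt.2 h')
        exact ih a b h F' hcard' (by simp [hF']) (by simp [hF'])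
          (fun x hx => hsub x (Finset.mem_coe.1 hx)) gaps
      have hcard1 : (insert A (insert c (F.filter (fun x => A ≤ x ∧ x ≤ c)))).card ≤ n := by
        have hsub : insert A (insert c (F.filter (fun x => A ≤ x ∧ x ≤ c))) ⊆ F.erase B := by
          intro x hx
          simp only [Finset.mem_insert, Finset.mem_filter] at hx
          have hxF : x ∈ F ∧ x ≤ c := by
            rcases hx with rfl | rfl | ⟨h1, _, h3⟩
            · exact ⟨hA, le_of_lt hAc⟩
            · exact ⟨hcF, le_refl _⟩
            · exact ⟨h1, h3⟩
          exact Finset.mem_erase.2 ⟨ne_of_lt (lt_of_le_of_lt hxF.2 hcB), hxF.1⟩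
        have h1 := Finset.card_le_card hsub
        have h2 := Finset.card_erase_lt_of_mem hB
        omega
      have hcard2 : (insert c (insert B (F.filter (fun x => c ≤ x ∧ x ≤ B)))).card ≤ n := by
        have hsub : insert c (insert B (F.filter (fun x => c ≤ x ∧ x ≤ B))) ⊆ F.erase A := by
          intro x hx
          simp only [Finset.mem_insert, Finset.mem_filter] at hx
          have hxF : x ∈ F ∧ c ≤ x := by
            rcases hx with rfl | rfl | ⟨h1, h3, _⟩
            · exact ⟨hcF, le_refl _⟩
            · exact ⟨hB, le_of_lt hcB⟩
            · exact ⟨h1, h3⟩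
          exact Finset.mem_erase.2 ⟨ne_of_gt (lt_of_lt_of_le hAc hxF.2), hxF.1⟩
        have h1 := Finset.card_le_card hsub
        have h2 := Finset.card_erase_lt_of_mem hA
        omega
      obtain ⟨L₁, hL₁, hlip₁⟩ := half A c hA hcF hAc hcard1
      obtain ⟨L₂, hL₂, hlip₂⟩ := half c B hcF hB hcB hcard2
      refine ⟨max L₁ L₂, le_trans hL₁ (le_max_left _ _), ?_⟩
      have key : ∀ u ∈ Set.Icc A B, ∀ v ∈ Set.Icc A B, u ≤ v → |h u - h v| ≤ max L₁ L₂ * |u - v| := by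
        intro u hu v hv huv
        rcases le_total v c with hvc | hvc
        · calc |h u - h v| ≤ L₁ * |u - v| := hlip₁ u ⟨hu.1, le_trans huv hvc⟩ v ⟨hv.1, hvc⟩
            _ ≤ max L₁ L₂ * |u - v| := by
              apply mul_le_mul_of_nonneg_right (le_max_left _ _) (abs_nonneg _)
        rcases le_total c u with hcu | hcu
        · calc |h u - h v| ≤ L₂ * |u - v| := hlip₂ u ⟨hcu, hu.2⟩ v ⟨le_trans hcu huv, hv.2⟩
            _ ≤ max L₁ L₂ * |u - v| := by
              apply mul_le_mul_of_nonneg_right (le_max_right _ _) (abs_nonneg _)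
        · have e1 : |h u - h c| ≤ L₁ * (c - u) := by
            have h' := hlip₁ u ⟨hu.1, hcu⟩ c ⟨le_of_lt hAc, le_refl _⟩
            have h'' : |u - c| = c - u := by rw [abs_of_nonpos (by linarith : u - c ≤ 0), neg_sub]
            rwa [h''] at h'
          have e2 : |h c - h v| ≤ L₂ * (v - c) := by
            have h' := hlip₂ c ⟨le_refl _, le_of_lt hcB⟩ v ⟨hvc, hv.2⟩
            have h'' : |c - v| = v - c := by rw [abs_of_nonpos (by linarith : c - v ≤ 0), neg_sub]
            rwa [h''] at h'
          have e3 : |h u - h v| ≤ |h u - h c| + |h c - h v| := by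
            have := abs_sub_le (h u) (h c) (h v)
            linarith [this]
          have e4 : |u - v| = (c - u) + (v - c) := by
            rw [abs_of_nonpos (by linarith), neg_sub]; ring
          rw [e4]
          have l1 : L₁ * (c - u) ≤ max L₁ L₂ * (c - u) :=
            mul_le_mul_of_nonneg_right (le_max_left _ _) (by linarith)
          have l2 : L₂ * (v - c) ≤ max L₁ L₂ * (v - c) :=
            mul_le_mul_of_nonneg_right (le_max_right _ _) (by linarith)
          nlinarith [e1, e2, e3]
      intro u hu v hv
      rcases le_total u v with huv | huv
      · exact key u hu v hv huv
      · rw [abs_sub_comm (h u) (h v), abs_sub_comm u v]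
        exact key v hv u hu huv
    · push_neg at hint
      have hgap : ∀ x ∈ F, x ≤ A ∨ B ≤ x := by
        intro x hx
        rcases lt_or_ge A x with h1 | h1
        · exact Or.inr (hint x hx h1)
        · exact Or.inl h1
      obtain ⟨k, d, hk⟩ := hg A hA B hB hAB' hgap
      refine ⟨|k|, abs_nonneg _, fun u hu v hv => ?_⟩
      rw [hk u hu, hk v hv]
      have : k * u + d - (k * v + d) = k * (u - v) := by ring
      rw [this, abs_mul]

lemma PAF.lipschitz {h : ℝ → ℝ} {A B : ℝ} (hp : PAF h A B) :
    ∃ L : ℝ, 0 ≤ L ∧ ∀ u ∈ Set.Icc A B, ∀ v ∈ Set.Icc A B, |h u - h v| ≤ L * |u - v| := by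
  obtain ⟨F, hA, hB, hF, hgaps⟩ := hp
  exact lip_PAF_aux F.card A B h F (le_refl _) hA hB hF hgaps

lemma PiecewiseAffineOn.toPAF {h : ℝ → ℝ} {A B : ℝ} (hp : PiecewiseAffineOn h A B) :
    PAF h A B := by
  classical
  obtain ⟨m, t, ht, h0, hlast, hpieces⟩ := hp
  refine ⟨Finset.image t Finset.univ, ?_, ?_, ?_, ?_⟩
  · exact Finset.mem_image.2 ⟨0, Finset.mem_univ _, h0⟩
  · exact Finset.mem_image.2 ⟨Fin.last m, Finset.mem_univ _, hlast⟩
  · intro x hx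
    obtain ⟨j, _, rfl⟩ := Finset.mem_image.1 (Finset.mem_coe.1 hx)
    exact ⟨h0 ▸ ht.monotone (Fin.zero_le j), hlast ▸ ht.monotone (Fin.le_last j)⟩
  · intro a ha b hb hab hgap
    obtain ⟨i, _, rfl⟩ := Finset.mem_image.1 ha
    obtain ⟨j, _, rfl⟩ := Finset.mem_image.1 hb
    have hij : i < j := ht.lt_iff_lt.1 hab
    have him : i.val < m := lt_of_lt_of_le hij (Nat.lt_succ_iff.1 j.isLt)
    set i' : Fin m := ⟨i.val, him⟩ with hi'
    have hcast : i'.castSucc = i := by ext; rfl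
    have hsucc : t j ≤ t i'.succ := by
      rcases hgap (t i'.succ) (Finset.mem_image.2 ⟨i'.succ, Finset.mem_univ _, rfl⟩) with h' | h'
      · exfalso
        have : i'.succ ≤ i := ht.le_iff_le.1 h'
        simp only [Fin.le_def, Fin.val_succ, hi'] at this
        omega
      · exact h'
    have hji : j = i'.succ := by
      have h1 : j ≤ i'.succ := ht.le_iff_le.1 hsucc
      have h2 : i'.succ ≤ j := by
        simp only [Fin.le_def, Fin.val_succ, hi']
        exact hij
      exact le_antisymm h1 h2
    obtain ⟨k, d, hk⟩ := hpieces i'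
    exact ⟨k, d, fun q hq => hk q ⟨hcast ▸ hq.1, hji ▸ hq.2⟩⟩

lemma PAF.toPiecewiseAffineOn {h : ℝ → ℝ} {A B : ℝ} (hp : PAF h A B) :
    PiecewiseAffineOn h A B := by
  classical
  obtain ⟨F, hA, hB, hF, hgaps⟩ := hp
  have hne : F.Nonempty := ⟨A, hA⟩
  have hcard : F.card = (F.card - 1) + 1 := by
    have := Finset.card_pos.2 hne
    omega
  set m := F.card - 1 with hm
  set iso := F.orderIsoOfFin hcard with hiso
  set t : Fin (m + 1) → ℝ := fun i => (iso i : ℝ) with ht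
  have htmono : StrictMono t := fun i j hij => Subtype.coe_lt_coe.2 (iso.strictMono hij)
  have hmemF : ∀ i, t i ∈ F := fun i => (iso i).2
  have hAle : ∀ x ∈ F, A ≤ x := fun x hx => (hF (Finset.mem_coe.2 hx)).1
  have hBge : ∀ x ∈ F, x ≤ B := fun x hx => (hF (Finset.mem_coe.2 hx)).2
  have ht0 : t 0 = A := by
    refine le_antisymm ?_ (hAle _ (hmemF 0))
    obtain ⟨i₀, hi₀⟩ : ∃ i₀, iso i₀ = (⟨A, hA⟩ : F) := ⟨iso.symm ⟨A, hA⟩, iso.apply_symm_apply _⟩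
    have : t i₀ = A := by rw [ht]; exact congrArg Subtype.val hi₀
    calc t 0 ≤ t i₀ := htmono.monotone (Fin.zero_le _)
      _ = A := this
  have htlast : t (Fin.last m) = B := by
    refine le_antisymm (hBge _ (hmemF _)) ?_
    obtain ⟨i₀, hi₀⟩ : ∃ i₀, iso i₀ = (⟨B, hB⟩ : F) := ⟨iso.symm ⟨B, hB⟩, iso.apply_symm_apply _⟩
    have h1 : t i₀ = B := by rw [ht]; exact congrArg Subtype.val hi₀
    calc B = t i₀ := h1.symm
      _ ≤ t (Fin.last m) := htmono.monotone (Fin.le_last _)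
  refine ⟨m, t, htmono, ht0, htlast, ?_⟩
  intro i
  refine hgaps (t i.castSucc) (hmemF _) (t i.succ) (hmemF _)
    (htmono (Fin.castSucc_lt_succ (i := i))) ?_
  intro c hc
  obtain ⟨j, hj⟩ : ∃ j, iso j = (⟨c, hc⟩ : F) := ⟨iso.symm ⟨c, hc⟩, iso.apply_symm_apply _⟩
  have hcj : t j = c := by rw [ht]; exact congrArg Subtype.val hj
  rcases le_or_gt j i.castSucc with h' | h'
  · exact Or.inl (hcj ▸ htmono.monotone h')
  · refine Or.inr (hcj ▸ htmono.monotone ?_)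
    exact Fin.castSucc_lt_iff_succ_le.1 h'

/-- The explicit piecewise-affine upper model for the inf-convolution of the
affine piece `k₁ x + d₁` on `[a₁,b₁]` with the affine piece `k₂ y + d₂` on
`[a₂,b₂]`, assuming `k₁ ≤ k₂` (so the minimum pushes `x` as high as possible),
extended beyond `[a₁+a₂, b₁+b₂]` with slope `±C`. -/
noncomputable def Mhat (a₁ b₁ k₁ d₁ a₂ b₂ k₂ d₂ C q : ℝ) : ℝ :=
  k₁ * (min b₁ (max (a₁ + a₂) (min q (b₁ + b₂)) - a₂)) + d₁ +
  (k₂ * (max (a₁ + a₂) (min q (b₁ + b₂)) - min b₁ (max (a₁ + a₂) (min q (b₁ + b₂)) - a₂)) + d₂) +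
  C * |q - max (a₁ + a₂) (min q (b₁ + b₂))|

lemma Mhat_feasible (a₁ b₁ k₁ d₁ a₂ b₂ k₂ d₂ C q : ℝ) (ha : a₁ ≤ b₁) (hb : a₂ ≤ b₂) :
    ∃ x y : ℝ, a₁ ≤ x ∧ x ≤ b₁ ∧ a₂ ≤ y ∧ y ≤ b₂ ∧
      x + y = max (a₁ + a₂) (min q (b₁ + b₂)) ∧
      Mhat a₁ b₁ k₁ d₁ a₂ b₂ k₂ d₂ C q =
        (k₁ * x + d₁) + (k₂ * y + d₂) + C * |q - (x + y)| := by
  set r := max (a₁ + a₂) (min q (b₁ + b₂)) with hr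
  have hrlo : a₁ + a₂ ≤ r := le_max_left _ _
  have hrhi : r ≤ b₁ + b₂ := max_le (by linarith) (min_le_right _ _)
  set x := min b₁ (r - a₂) with hx
  refine ⟨x, r - x, ?_, min_le_left _ _, ?_, ?_, by ring, ?_⟩
  · exact le_min ha (by linarith)
  · have : x ≤ r - a₂ := min_le_right _ _
    linarith
  · have : r - b₂ ≤ x := le_min (by linarith) (by linarith)
    linarith
  · simp only [Mhat, ← hr, ← hx]
    ring_nf

lemma Mhat_le (a₁ b₁ k₁ d₁ a₂ b₂ k₂ d₂ C q x₀ y₀ : ℝ) (hk : k₁ ≤ k₂)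
    (hx₀ : x₀ ∈ Set.Icc a₁ b₁) (hy₀ : y₀ ∈ Set.Icc a₂ b₂) (hq : x₀ + y₀ = q) :
    Mhat a₁ b₁ k₁ d₁ a₂ b₂ k₂ d₂ C q ≤ (k₁ * x₀ + d₁) + (k₂ * y₀ + d₂) := by
  have hrlo : a₁ + a₂ ≤ q := by have := hx₀.1; have := hy₀.1; linarith
  have hrhi : q ≤ b₁ + b₂ := by have := hx₀.2; have := hy₀.2; linarith
  have hrq : max (a₁ + a₂) (min q (b₁ + b₂)) = q := by
    rw [min_eq_left hrhi, max_eq_right hrlo]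
  simp only [Mhat, hrq, sub_self, abs_zero, mul_zero, add_zero]
  set x := min b₁ (q - a₂) with hx
  have hxx₀ : x₀ ≤ x := le_min hx₀.2 (by have := hy₀.1; linarith)
  have hy : y₀ = q - x₀ := by linarith
  rw [hy]
  nlinarith [mul_nonpos_of_nonpos_of_nonneg (sub_nonpos.2 hk) (sub_nonneg.2 hxx₀)]

lemma Mhat_PAF (a₁ b₁ k₁ d₁ a₂ b₂ k₂ d₂ C A B : ℝ) (ha : a₁ ≤ b₁) (hb : a₂ ≤ b₂)
    (hA : A ≤ a₁ + a₂) (hB : b₁ + b₂ ≤ B) :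
    PAF (fun q => Mhat a₁ b₁ k₁ d₁ a₂ b₂ k₂ d₂ C q) A B := by
  classical
  set α := a₁ + a₂ with hα
  set γ := b₁ + a₂ with hγ
  set β := b₁ + b₂ with hβ
  have hαγ : α ≤ γ := by simp only [hα, hγ]; linarith
  have hγβ : γ ≤ β := by simp only [hγ, hβ]; linarith
  have hAB : A ≤ B := le_trans hA (le_trans (le_trans hαγ hγβ) hB)
  refine ⟨{A, α, γ, β, B}, by simp, by simp, ?_, ?_⟩
  · intro x hx
    simp only [Finset.coe_insert, Finset.coe_singleton, Set.mem_insert_iff,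
      Set.mem_singleton_iff] at hx
    rcases hx with rfl | rfl | rfl | rfl | rfl
    · exact ⟨le_refl _, hAB⟩
    · exact ⟨hA, by linarith⟩
    · exact ⟨by linarith, by linarith⟩
    · exact ⟨by linarith, hB⟩
    · exact ⟨hAB, le_refl _⟩
  intro u hu v hv huv hgap
  have huA : A ≤ u := by
    simp only [Finset.mem_insert, Finset.mem_singleton] at hu
    rcases hu with rfl | rfl | rfl | rfl | rfl <;> linarith
  have hvB : v ≤ B := by
    simp only [Finset.mem_insert, Finset.mem_singleton] at hv
    rcases hv with rfl | rfl | rfl | rfl | rfl <;> linarith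
  -- band formulas
  have band1 : ∀ q, q ≤ α → Mhat a₁ b₁ k₁ d₁ a₂ b₂ k₂ d₂ C q =
      (-C) * q + (k₁ * a₁ + d₁ + (k₂ * a₂ + d₂) + C * α) := by
    intro q hq
    have h1 : min q β = q := min_eq_left (by linarith)
    have h2 : max α (min q β) = α := by rw [h1, max_eq_left hq]
    have h3 : min b₁ (α - a₂) = a₁ := by
      have : α - a₂ = a₁ := by simp only [hα]; ring
      rw [this, min_eq_right ha]
    have h4 : |q - α| = α - q := by rw [abs_of_nonpos (by linarith), neg_sub]
    simp only [Mhat, ← hα, ← hβ, h2, h3, h4]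
    have : α - a₁ = a₂ := by simp only [hα]; ring
    rw [this]; ring
  have band2 : ∀ q, α ≤ q → q ≤ γ → Mhat a₁ b₁ k₁ d₁ a₂ b₂ k₂ d₂ C q =
      k₁ * q + (d₁ + ((k₂ - k₁) * a₂ + d₂)) := by
    intro q hq1 hq2
    have h1 : min q β = q := min_eq_left (by linarith)
    have h2 : max α (min q β) = q := by rw [h1, max_eq_right hq1]
    have h3 : min b₁ (q - a₂) = q - a₂ := min_eq_right (by simp only [hγ] at hq2; linarith)
    have h4 : |q - q| = 0 := by simp
    simp only [Mhat, ← hα, ← hβ, h2, h3, h4]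
    ring
  have band3 : ∀ q, γ ≤ q → q ≤ β → Mhat a₁ b₁ k₁ d₁ a₂ b₂ k₂ d₂ C q =
      k₂ * q + (k₁ * b₁ + d₁ + (d₂ - k₂ * b₁)) := by
    intro q hq1 hq2
    have h1 : min q β = q := min_eq_left hq2
    have h2 : max α (min q β) = q := by rw [h1, max_eq_right (by linarith)]
    have h3 : min b₁ (q - a₂) = b₁ := min_eq_left (by simp only [hγ] at hq1; linarith)
    have h4 : |q - q| = 0 := by simp
    simp only [Mhat, ← hα, ← hβ, h2, h3, h4]
    ring
  have band4 : ∀ q, β ≤ q → Mhat a₁ b₁ k₁ d₁ a₂ b₂ k₂ d₂ C q =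
      C * q + (k₁ * b₁ + d₁ + (k₂ * b₂ + d₂) - C * β) := by
    intro q hq
    have h2 : max α (min q β) = β := by rw [min_eq_right hq, max_eq_right (by linarith)]
    have h3 : min b₁ (β - a₂) = b₁ := min_eq_left (by simp only [hβ]; linarith)
    have h4 : |q - β| = q - β := abs_of_nonneg (by linarith)
    simp only [Mhat, ← hα, ← hβ, h2, h3, h4]
    have : β - b₁ = b₂ := by simp only [hβ]; ring
    rw [this]; ring
  have hgapα := hgap α (by simp)
  have hgapγ := hgap γ (by simp)
  have hgapβ := hgap β (by simp)
  rcases hgapα with h1 | h1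
  · rcases hgapγ with h2 | h2
    · rcases hgapβ with h3 | h3
      · exact ⟨C, _, fun q hq => band4 q (le_trans h3 hq.1)⟩
      · exact ⟨k₂, _, fun q hq => band3 q (le_trans h2 hq.1) (le_trans hq.2 h3)⟩
    · exact ⟨k₁, _, fun q hq => band2 q (le_trans h1 hq.1) (le_trans hq.2 h2)⟩
  · exact ⟨-C, _, fun q hq => band1 q (le_trans hq.2 h1)⟩

lemma covering {m : ℕ} (hm : 0 < m) (t : Fin (m + 1) → ℝ) (ht : StrictMono t)
    {x : ℝ} (hx : x ∈ Set.Icc (t 0) (t (Fin.last m))) :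
    ∃ i : Fin m, t i.castSucc ≤ x ∧ x ≤ t i.succ := by
  by_contra hcon
  push_neg at hcon
  have all : ∀ j : Fin (m + 1), t j ≤ x := by
    intro j
    induction j using Fin.induction with
    | zero => exact hx.1
    | succ i ih => exact (hcon i ih).le
  have hxl : x = t (Fin.last m) := le_antisymm hx.2 (all _)
  set i : Fin m := ⟨m - 1, by omega⟩ with hi
  have hsucc : i.succ = Fin.last m := by
    ext
    simp only [Fin.val_succ, hi, Fin.val_last]
    omega
  have := hcon i (all i.castSucc)
  rw [hsucc, ← hxl] at this
  exact absurd this (lt_irrefl x)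

lemma pieces {h : ℝ → ℝ} {A B : ℝ} (hp : PiecewiseAffineOn h A B) :
    A ≤ B ∧ ∃ (N : ℕ) (a b k d : Fin (N + 1) → ℝ),
      (∀ i, a i ≤ b i ∧ A ≤ a i ∧ b i ≤ B ∧
        ∀ x ∈ Set.Icc (a i) (b i), h x = k i * x + d i) ∧
      (∀ x ∈ Set.Icc A B, ∃ i, a i ≤ x ∧ x ≤ b i) := by
  obtain ⟨m, t, ht, h0, hlast, hpieces⟩ := hp
  have hAB : A ≤ B := h0 ▸ hlast ▸ ht.monotone (Fin.zero_le _)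
  refine ⟨hAB, ?_⟩
  cases m with
  | zero =>
    have hBA : B = A := by rw [← h0, ← hlast]; rfl
    refine ⟨0, fun _ => A, fun _ => A, fun _ => 0, fun _ => h A, ?_, ?_⟩
    · refine fun i => ⟨le_refl _, le_refl _, hBA ▸ le_refl _, fun x hx => ?_⟩
      have : x = A := le_antisymm hx.2 hx.1
      rw [this]; ring
    · intro x hx
      rw [hBA] at hx
      exact ⟨0, hx.1, hx.2⟩
  | succ n =>
    choose k d hkd using hpieces
    refine ⟨n, fun i => t i.castSucc, fun i => t i.succ, k, d, ?_, ?_⟩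
    · refine fun i => ⟨(ht (Fin.castSucc_lt_succ (i := i))).le, ?_, ?_, hkd i⟩
      · exact h0 ▸ ht.monotone (Fin.zero_le _)
      · exact hlast ▸ ht.monotone (Fin.le_last _)
    · intro x hx
      rw [← h0, ← hlast] at hx
      exact covering (Nat.succ_pos n) t ht hx

lemma PAF_inf' {ι : Type*} (s : Finset ι) (hs : s.Nonempty) (G : ι → ℝ → ℝ) (A B : ℝ)
    (h : ∀ i ∈ s, PAF (G i) A B) :
    PAF (fun q => s.inf' hs (fun i => G i q)) A B := by
  classical
  revert h
  induction hs using Finset.Nonempty.cons_induction with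
  | singleton a =>
    intro h
    refine PAF_congr (fun q _ => ?_) (h a (Finset.mem_singleton_self a))
    simp
  | cons a s ha hs ih =>
    intro h
    have h1 : PAF (fun q => min (G a q) (s.inf' hs (fun i => G i q))) A B :=
      (h a (Finset.mem_cons_self a s)).min
        (ih (fun i hi => h i (Finset.mem_cons_of_mem hi)))
    refine PAF_congr (fun q _ => ?_) h1
    rw [Finset.inf'_cons]

lemma key_upper {A₁ B₁ A₂ B₂ L₁ L₂ C : ℝ} {V f : ℝ → ℝ}
    (hL₁ : 0 ≤ L₁) (hL₂ : 0 ≤ L₂)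
    (lip₁ : ∀ u ∈ Set.Icc A₁ B₁, ∀ v ∈ Set.Icc A₁ B₁, |V u - V v| ≤ L₁ * |u - v|)
    (lip₂ : ∀ u ∈ Set.Icc A₂ B₂, ∀ v ∈ Set.Icc A₂ B₂, |f u - f v| ≤ L₂ * |u - v|)
    (hC : L₁ + 2 * L₂ ≤ C) (hAB₁ : A₁ ≤ B₁)
    {q x y : ℝ} (hq : q ∈ Set.Icc (A₁ + A₂) (B₁ + B₂))
    (hx : x ∈ Set.Icc A₁ B₁) (hy : y ∈ Set.Icc A₂ B₂) :
    ∃ x' y', x' ∈ Set.Icc A₁ B₁ ∧ y' ∈ Set.Icc A₂ B₂ ∧ x' + y' = q ∧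
      V x' + f y' ≤ V x + f y + C * |q - (x + y)| := by
  set δ := q - (x + y) with hδ
  set x' := max A₁ (min (x + δ) B₁) with hx'
  set y' := q - x' with hy'
  have hx'mem : x' ∈ Set.Icc A₁ B₁ := ⟨le_max_left _ _, max_le hAB₁ (min_le_right _ _)⟩
  have hxd : |x' - x| ≤ |δ| ∧ y' ∈ Set.Icc A₂ B₂ := by
    rcases le_total (x + δ) A₁ with h1 | h1
    · have e : x' = A₁ := by
        rw [hx', min_eq_left (le_trans h1 hAB₁), max_eq_left h1]
      constructor
      · rw [e, abs_of_nonpos (by linarith [hx.1] : A₁ - x ≤ 0)]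
        have := neg_abs_le δ
        linarith [hx.1]
      · rw [hy', e]
        constructor
        · linarith [hq.1]
        · have : q - A₁ ≤ y := by simp only [hδ] at h1 ⊢; linarith
          linarith [hy.2]
    rcases le_total B₁ (x + δ) with h2 | h2
    · have e : x' = B₁ := by rw [hx', min_eq_right h2, max_eq_right hAB₁]
      constructor
      · rw [e, abs_of_nonneg (by linarith [hx.2] : (0:ℝ) ≤ B₁ - x)]
        have := le_abs_self δ
        linarith [hx.2]
      · rw [hy', e]
        constructor
        · have : A₂ ≤ q - B₁ := by simp only [hδ] at h2 ⊢; linarith [hy.1]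
          linarith
        · linarith [hq.2]
    · have e : x' = x + δ := by rw [hx', min_eq_left h2, max_eq_right h1]
      constructor
      · rw [e]; simp
      · have : y' = y := by rw [hy', e]; simp only [hδ]; ring
        rw [this]; exact hy
  obtain ⟨hxd1, hy'mem⟩ := hxd
  refine ⟨x', y', hx'mem, hy'mem, by rw [hy']; ring, ?_⟩
  have hyd : |y' - y| ≤ 2 * |δ| := by
    have : y' - y = δ - (x' - x) := by rw [hy', hδ]; ring
    rw [this]
    calc |δ - (x' - x)| ≤ |δ| + |x' - x| := abs_sub _ _
      _ ≤ 2 * |δ| := by linarith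
  have e1 : V x' - V x ≤ L₁ * |δ| := by
    calc V x' - V x ≤ |V x' - V x| := le_abs_self _
      _ ≤ L₁ * |x' - x| := lip₁ x' hx'mem x hx
      _ ≤ L₁ * |δ| := mul_le_mul_of_nonneg_left hxd1 hL₁
  have e2 : f y' - f y ≤ L₂ * (2 * |δ|) := by
    calc f y' - f y ≤ |f y' - f y| := le_abs_self _
      _ ≤ L₂ * |y' - y| := lip₂ y' hy'mem y hy
      _ ≤ L₂ * (2 * |δ|) := mul_le_mul_of_nonneg_left hyd hL₂
  have e3 : (L₁ + 2 * L₂) * |δ| ≤ C * |δ| :=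
    mul_le_mul_of_nonneg_right hC (abs_nonneg _)
  nlinarith [e1, e2, e3]

lemma attain {A₁ B₁ A₂ B₂ : ℝ} {V f : ℝ → ℝ}
    (hVc : ContinuousOn V (Set.Icc A₁ B₁)) (hfc : ContinuousOn f (Set.Icc A₂ B₂))
    (hAB₁ : A₁ ≤ B₁) (hAB₂ : A₂ ≤ B₂) {q : ℝ} (hq : q ∈ Set.Icc (A₁ + A₂) (B₁ + B₂)) :
    ∃ x₀ y₀ : ℝ, x₀ ∈ Set.Icc A₁ B₁ ∧ y₀ ∈ Set.Icc A₂ B₂ ∧ x₀ + y₀ = q ∧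
      IsLeast {z | ∃ x ∈ Set.Icc A₁ B₁, ∃ y ∈ Set.Icc A₂ B₂, x + y = q ∧ z = V x + f y}
        (V x₀ + f y₀) := by
  set K : Set (ℝ × ℝ) :=
    (Set.Icc A₁ B₁ ×ˢ Set.Icc A₂ B₂) ∩ {p : ℝ × ℝ | p.1 + p.2 = q} with hK
  have hKc : IsCompact K := by
    apply IsCompact.inter_right (isCompact_Icc.prod isCompact_Icc)
    exact isClosed_eq (continuous_fst.add continuous_snd) continuous_const
  have hKne : K.Nonempty := by
    set x := max A₁ (min (q - A₂) B₁) with hx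
    refine ⟨(x, q - x), ⟨⟨le_max_left _ _, max_le hAB₁ (min_le_right _ _)⟩, ?_⟩, by simp⟩
    show q - x ∈ Set.Icc A₂ B₂
    rcases le_total (q - A₂) A₁ with h1 | h1
    · have e : x = A₁ := by rw [hx, min_eq_left (le_trans h1 hAB₁), max_eq_left h1]
      rw [e]
      exact ⟨by linarith [hq.1], by linarith⟩

    rcases le_total B₁ (q - A₂) with h2 | h2
    · have e : x = B₁ := by rw [hx, min_eq_right h2, max_eq_right hAB₁]
      rw [e]
      exact ⟨by linarith, by linarith [hq.2]⟩
    · have e : x = q - A₂ := by rw [hx, min_eq_left h2, max_eq_right h1]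
      rw [e]
      simp only [sub_sub_cancel]
      exact ⟨le_refl _, hAB₂⟩
  have hcont : ContinuousOn (fun p : ℝ × ℝ => V p.1 + f p.2) K := by
    apply ContinuousOn.add
    · exact hVc.comp continuous_fst.continuousOn (fun p hp => hp.1.1)
    · exact hfc.comp continuous_snd.continuousOn (fun p hp => hp.1.2)
  obtain ⟨p₀, hp₀, hmin⟩ := hKc.exists_isMinOn hKne hcont
  refine ⟨p₀.1, p₀.2, hp₀.1.1, hp₀.1.2, hp₀.2, ?_, ?_⟩
  · exact ⟨p₀.1, hp₀.1.1, p₀.2, hp₀.1.2, hp₀.2, rfl⟩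
  · rintro z ⟨x, hx, y, hy, hxy, rfl⟩
    exact hmin (⟨⟨hx, hy⟩, hxy⟩ : (x, y) ∈ K)


/-- If `V` is continuous and piecewise affine on `[A₁, B₁]` and `f` is continuous
and piecewise affine on `[A₂, B₂]`, then their superposition
`q ↦ min { V x + f y : x ∈ [A₁,B₁], y ∈ [A₂,B₂], x + y = q }` is piecewise affine
on `[A₁ + A₂, B₁ + B₂]`. -/
theorem stmt_4 (A₁ B₁ A₂ B₂ : ℝ) (V f : ℝ → ℝ)
    (hVc : ContinuousOn V (Set.Icc A₁ B₁)) (hVp : PiecewiseAffineOn V A₁ B₁)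
    (hfc : ContinuousOn f (Set.Icc A₂ B₂)) (hfp : PiecewiseAffineOn f A₂ B₂) :
    PiecewiseAffineOn
      (fun q => sInf {z | ∃ x ∈ Set.Icc A₁ B₁, ∃ y ∈ Set.Icc A₂ B₂,
        x + y = q ∧ z = V x + f y})
      (A₁ + A₂) (B₁ + B₂) := by
  classical
  obtain ⟨hAB₁, N₁, a₁, b₁, k₁, d₁, hp₁, hcov₁⟩ := pieces hVp
  obtain ⟨hAB₂, N₂, a₂, b₂, k₂, d₂, hp₂, hcov₂⟩ := pieces hfp
  obtain ⟨L₁, hL₁, lip₁⟩ := hVp.toPAF.lipschitz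
  obtain ⟨L₂, hL₂, lip₂⟩ := hfp.toPAF.lipschitz
  set C := L₁ + 2 * L₂ with hCdef
  set G : Fin (N₁ + 1) × Fin (N₂ + 1) → ℝ → ℝ := fun ij q =>
    if k₁ ij.1 ≤ k₂ ij.2 then
      Mhat (a₁ ij.1) (b₁ ij.1) (k₁ ij.1) (d₁ ij.1) (a₂ ij.2) (b₂ ij.2) (k₂ ij.2) (d₂ ij.2) C q
    else
      Mhat (a₂ ij.2) (b₂ ij.2) (k₂ ij.2) (d₂ ij.2) (a₁ ij.1) (b₁ ij.1) (k₁ ij.1) (d₁ ij.1) C q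
    with hG
  have hGPAF : ∀ ij, PAF (G ij) (A₁ + A₂) (B₁ + B₂) := by
    rintro ⟨i, j⟩
    obtain ⟨hab₁, hAa₁, hbB₁, haff₁⟩ := hp₁ i
    obtain ⟨hab₂, hAa₂, hbB₂, haff₂⟩ := hp₂ j
    by_cases hk : k₁ i ≤ k₂ j
    · refine PAF_congr (fun q _ => ?_)
        (Mhat_PAF (a₁ i) (b₁ i) (k₁ i) (d₁ i) (a₂ j) (b₂ j) (k₂ j) (d₂ j) C (A₁ + A₂) (B₁ + B₂)
          hab₁ hab₂ (by linarith) (by linarith))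
      simp only [hG, if_pos hk]
    · refine PAF_congr (fun q _ => ?_)
        (Mhat_PAF (a₂ j) (b₂ j) (k₂ j) (d₂ j) (a₁ i) (b₁ i) (k₁ i) (d₁ i) C (A₁ + A₂) (B₁ + B₂)
          hab₂ hab₁ (by linarith) (by linarith))
      simp only [hG, if_neg hk]
  have hne : (Finset.univ : Finset (Fin (N₁ + 1) × Fin (N₂ + 1))).Nonempty :=
    Finset.univ_nonempty
  have hminPAF := PAF_inf' Finset.univ hne G (A₁ + A₂) (B₁ + B₂) (fun ij _ => hGPAF ij)
  refine PAF.toPiecewiseAffineOn (PAF_congr ?_ hminPAF)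
  intro q hq
  obtain ⟨x₀, y₀, hx₀, hy₀, hxy₀, hleast⟩ := attain hVc hfc hAB₁ hAB₂ hq
  have hgq : sInf {z | ∃ x ∈ Set.Icc A₁ B₁, ∃ y ∈ Set.Icc A₂ B₂,
      x + y = q ∧ z = V x + f y} = V x₀ + f y₀ := hleast.csInf_eq
  show sInf _ = _
  rw [hgq]
  apply le_antisymm
  · apply Finset.le_inf'
    rintro ⟨i, j⟩ -
    obtain ⟨hab₁, hAa₁, hbB₁, haff₁⟩ := hp₁ i
    obtain ⟨hab₂, hAa₂, hbB₂, haff₂⟩ := hp₂ j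
    by_cases hk : k₁ i ≤ k₂ j
    · obtain ⟨x, y, hx1, hx2, hy1, hy2, _, hval⟩ :=
        Mhat_feasible (a₁ i) (b₁ i) (k₁ i) (d₁ i) (a₂ j) (b₂ j) (k₂ j) (d₂ j) C q hab₁ hab₂
      have hxI : x ∈ Set.Icc A₁ B₁ := ⟨hAa₁.trans hx1, hx2.trans hbB₁⟩
      have hyI : y ∈ Set.Icc A₂ B₂ := ⟨hAa₂.trans hy1, hy2.trans hbB₂⟩
      obtain ⟨x', y', hx', hy', hsum', hbound⟩ :=
        key_upper hL₁ hL₂ lip₁ lip₂ (le_refl C) hAB₁ hq hxI hyI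
      have hVx : V x = k₁ i * x + d₁ i := haff₁ x ⟨hx1, hx2⟩
      have hfy : f y = k₂ j * y + d₂ j := haff₂ y ⟨hy1, hy2⟩
      have hGval : G (i, j) q = V x + f y + C * |q - (x + y)| := by
        simp only [hG, if_pos hk]
        rw [hval, hVx, hfy]
      have hlb := hleast.2 ⟨x', hx', y', hy', hsum', rfl⟩
      rw [hGval]
      linarith [hbound, hlb]
    · obtain ⟨x, y, hx1, hx2, hy1, hy2, _, hval⟩ :=
        Mhat_feasible (a₂ j) (b₂ j) (k₂ j) (d₂ j) (a₁ i) (b₁ i) (k₁ i) (d₁ i) C q hab₂ hab₁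
      have hxI : x ∈ Set.Icc A₂ B₂ := ⟨hAa₂.trans hx1, hx2.trans hbB₂⟩
      have hyI : y ∈ Set.Icc A₁ B₁ := ⟨hAa₁.trans hy1, hy2.trans hbB₁⟩
      obtain ⟨x', y', hx', hy', hsum', hbound⟩ :=
        key_upper hL₁ hL₂ lip₁ lip₂ (le_refl C) hAB₁ hq hyI hxI
      have hVy : V y = k₁ i * y + d₁ i := haff₁ y ⟨hy1, hy2⟩
      have hfx : f x = k₂ j * x + d₂ j := haff₂ x ⟨hx1, hx2⟩
      have hGval : G (i, j) q = f x + V y + C * |q - (x + y)| := by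
        simp only [hG, if_neg hk]
        rw [hval, hVy, hfx]
      have hlb := hleast.2 ⟨x', hx', y', hy', hsum', rfl⟩
      have habs : |q - (y + x)| = |q - (x + y)| := by rw [add_comm]
      rw [hGval]
      rw [habs] at hbound
      linarith [hbound, hlb]
  · obtain ⟨i, hi1, hi2⟩ := hcov₁ x₀ hx₀
    obtain ⟨j, hj1, hj2⟩ := hcov₂ y₀ hy₀
    refine le_trans (Finset.inf'_le _ (Finset.mem_univ (i, j))) ?_
    obtain ⟨hab₁, hAa₁, hbB₁, haff₁⟩ := hp₁ i
    obtain ⟨hab₂, hAa₂, hbB₂, haff₂⟩ := hp₂ j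
    have hVx₀ : V x₀ = k₁ i * x₀ + d₁ i := haff₁ x₀ ⟨hi1, hi2⟩
    have hfy₀ : f y₀ = k₂ j * y₀ + d₂ j := haff₂ y₀ ⟨hj1, hj2⟩
    by_cases hk : k₁ i ≤ k₂ j
    · have := Mhat_le (a₁ i) (b₁ i) (k₁ i) (d₁ i) (a₂ j) (b₂ j) (k₂ j) (d₂ j) C q x₀ y₀ hk
        ⟨hi1, hi2⟩ ⟨hj1, hj2⟩ hxy₀
      have hGval : G (i, j) q = Mhat (a₁ i) (b₁ i) (k₁ i) (d₁ i) (a₂ j) (b₂ j) (k₂ j) (d₂ j) C q := by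
        simp only [hG, if_pos hk]
      rw [hGval, hVx₀, hfy₀]
      linarith [this]
    · have hk' : k₂ j ≤ k₁ i := le_of_not_ge hk
      have := Mhat_le (a₂ j) (b₂ j) (k₂ j) (d₂ j) (a₁ i) (b₁ i) (k₁ i) (d₁ i) C q y₀ x₀ hk'
        ⟨hj1, hj2⟩ ⟨hi1, hi2⟩ (by linarith)
      have hGval : G (i, j) q = Mhat (a₂ j) (b₂ j) (k₂ j) (d₂ j) (a₁ i) (b₁ i) (k₁ i) (d₁ i) C q := by
        simp only [hG, if_neg hk]
      rw [hGval, hVx₀, hfy₀]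
      linarith [this]
end

section
/- Let V be given as V(q) = min over a finite nonempty family of pairs (affine function k_l·q + d_l, closed interval [p_l, r_l] with p_l, r_l ∈ ℤ) of { k_l·q + d_l : q ∈ [p_l, r_l] }, defined on D_V = ⋃_l [p_l, r_l], and let f be given analogously by a finite nonempty family of affine pieces on closed intervals with integer endpoints, defined on D_f. Then for every integer q such that { (x, y) : x ∈ D_V, y ∈ D_f, x + y = q } is nonempty, the minimum of V(x) + f(y) over this set is attained at some pair (x, y) with x ∈ ℤ and y = q − x ∈ ℤ. -/
/-- Let `V` and `f` be piecewise linear functions given by finite nonempty families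
of affine segments on closed intervals with integer endpoints (the value at a point
of the domain being the minimum of the values of the segments containing it). Then
for every integer `q` whose feasible set `{(x, y) : x ∈ D_V, y ∈ D_f, x + y = q}`
is nonempty, the minimum of `V x + f y` over this set is attained at a pair
`(x, y)` with both `x` and `y = q - x` integer. -/
theorem stmt_8 {ι κ : Type*} [Fintype ι] [Fintype κ] [Nonempty ι] [Nonempty κ]
    (k d : ι → ℝ) (p r : ι → ℤ) (hpr : ∀ l, p l ≤ r l)
    (k' d' : κ → ℝ) (p' r' : κ → ℤ) (hpr' : ∀ l, p' l ≤ r' l)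
    (DV Df : Set ℝ)
    (hDV : DV = ⋃ l, Set.Icc ((p l : ℝ)) ((r l : ℝ)))
    (hDf : Df = ⋃ l, Set.Icc ((p' l : ℝ)) ((r' l : ℝ)))
    (V f : ℝ → ℝ)
    (hV : ∀ x ∈ DV,
      IsLeast {z | ∃ l, x ∈ Set.Icc ((p l : ℝ)) ((r l : ℝ)) ∧ z = k l * x + d l} (V x))
    (hf : ∀ y ∈ Df,
      IsLeast {z | ∃ l, y ∈ Set.Icc ((p' l : ℝ)) ((r' l : ℝ)) ∧ z = k' l * y + d' l} (f y))
    (q : ℤ) (hfeas : ∃ x ∈ DV, ∃ y ∈ Df, x + y = (q : ℝ)) :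
    ∃ x ∈ DV, ∃ y ∈ Df, x + y = (q : ℝ) ∧
      (∃ m : ℤ, (m : ℝ) = x) ∧ (∃ m : ℤ, (m : ℝ) = y) ∧
      ∀ x' ∈ DV, ∀ y' ∈ Df, x' + y' = (q : ℝ) → V x + f y ≤ V x' + f y' := by
  classical
  set A : ι × κ → ℤ := fun lm => max (p lm.1) (q - r' lm.2) with hAdef
  set B : ι × κ → ℤ := fun lm => min (r lm.1) (q - p' lm.2) with hBdef
  set h : ι × κ → ℝ → ℝ :=
    fun lm x => k lm.1 * x + d lm.1 + (k' lm.2 * ((q : ℝ) - x) + d' lm.2) with hhdef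
  -- affine endpoint lemma
  have haff : ∀ lm : ι × κ, ∀ a b x : ℝ, a ≤ x → x ≤ b →
      min (h lm a) (h lm b) ≤ h lm x := by
    intro lm a b x hax hxb
    rcases le_total (k lm.1) (k' lm.2) with hc | hc
    · exact le_trans (min_le_right _ _) (by simp only [hhdef]; nlinarith)
    · exact le_trans (min_le_left _ _) (by simp only [hhdef]; nlinarith)
  let C : Finset ((ι × κ) × Bool) :=
    (Finset.univ.filter (fun lm : ι × κ => A lm ≤ B lm)) ×ˢ Finset.univ
  have hCne : C.Nonempty := by
    obtain ⟨x, hx, y, hy, hxy⟩ := hfeas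
    rw [hDV] at hx; rw [hDf] at hy
    obtain ⟨_, ⟨l, rfl⟩, hxl⟩ := hx
    obtain ⟨_, ⟨m, rfl⟩, hym⟩ := hy
    refine ⟨((l, m), true), ?_⟩
    simp only [C, Finset.mem_product, Finset.mem_filter, Finset.mem_univ, true_and, and_true]
    have hy' : y = (q : ℝ) - x := by linarith
    have h1 : ((A (l, m) : ℤ) : ℝ) ≤ x := by
      simp only [hAdef]; push_cast [Int.cast_max]
      refine max_le hxl.1 ?_
      have := hym.2; rw [hy'] at this; linarith
    have h2 : x ≤ ((B (l, m) : ℤ) : ℝ) := by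
      simp only [hBdef]; push_cast [Int.cast_min]
      refine le_min hxl.2 ?_
      have := hym.1; rw [hy'] at this; linarith
    exact_mod_cast le_trans h1 h2
  set ep : (ι × κ) × Bool → ℤ := fun c => if c.2 then B c.1 else A c.1 with hepdef
  obtain ⟨c0, hc0C, hmin⟩ := C.exists_min_image (fun c => h c.1 ((ep c : ℤ) : ℝ)) hCne
  have hc0AB : A c0.1 ≤ B c0.1 := by
    have := (Finset.mem_product.mp hc0C).1
    simpa using (Finset.mem_filter.mp this).2
  have hepA : A c0.1 ≤ ep c0 := by
    simp only [hepdef]; split <;> [exact hc0AB; exact le_refl _]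
  have hepB : ep c0 ≤ B c0.1 := by
    simp only [hepdef]; split <;> [exact le_refl _; exact hc0AB]
  set x0 : ℝ := ((ep c0 : ℤ) : ℝ) with hx0def
  set y0 : ℝ := (q : ℝ) - x0 with hy0def
  -- basic integer bounds
  have hpA : ∀ lm : ι × κ, (p lm.1) ≤ A lm := fun lm => le_max_left _ _
  have hqA : ∀ lm : ι × κ, q - r' lm.2 ≤ A lm := fun lm => le_max_right _ _
  have hBr : ∀ lm : ι × κ, B lm ≤ r lm.1 := fun lm => min_le_left _ _
  have hBq : ∀ lm : ι × κ, B lm ≤ q - p' lm.2 := fun lm => min_le_right _ _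
  have hx0Icc : x0 ∈ Set.Icc ((p c0.1.1 : ℝ)) ((r c0.1.1 : ℝ)) := by
    rw [hx0def]
    constructor
    · exact_mod_cast le_trans (hpA c0.1) hepA
    · exact_mod_cast le_trans hepB (hBr c0.1)
  have hy0Icc : y0 ∈ Set.Icc ((p' c0.1.2 : ℝ)) ((r' c0.1.2 : ℝ)) := by
    have h1 : q - r' c0.1.2 ≤ ep c0 := le_trans (hqA c0.1) hepA
    have h2 : ep c0 ≤ q - p' c0.1.2 := le_trans hepB (hBq c0.1)
    have h1' : ((q : ℝ)) - (r' c0.1.2 : ℝ) ≤ x0 := by rw [hx0def]; exact_mod_cast h1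
    have h2' : x0 ≤ ((q : ℝ)) - (p' c0.1.2 : ℝ) := by rw [hx0def]; exact_mod_cast h2
    constructor <;> [linarith; linarith]
  have hx0DV : x0 ∈ DV := by rw [hDV]; exact Set.mem_iUnion.mpr ⟨c0.1.1, hx0Icc⟩
  have hy0Df : y0 ∈ Df := by rw [hDf]; exact Set.mem_iUnion.mpr ⟨c0.1.2, hy0Icc⟩
  refine ⟨x0, hx0DV, y0, hy0Df, by simp [hy0def], ⟨ep c0, hx0def.symm⟩, ?_, ?_⟩
  · exact ⟨q - ep c0, by push_cast [hy0def, hx0def]; ring⟩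
  · intro x' hx' y' hy' hxy'
    obtain ⟨⟨l, hxl, hVx⟩, _⟩ := hV x' hx'
    obtain ⟨⟨m, hym, hfy⟩, _⟩ := hf y' hy'
    have hy'eq : y' = (q : ℝ) - x' := by linarith
    -- V x0 + f y0 ≤ h c0.1 x0
    have hVx0 : V x0 ≤ k c0.1.1 * x0 + d c0.1.1 :=
      (hV x0 hx0DV).2 ⟨c0.1.1, hx0Icc, rfl⟩
    have hfy0 : f y0 ≤ k' c0.1.2 * y0 + d' c0.1.2 :=
      (hf y0 hy0Df).2 ⟨c0.1.2, hy0Icc, rfl⟩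
    have hstep1 : V x0 + f y0 ≤ h c0.1 x0 := by
      simp only [hhdef, hy0def] at *; linarith
    -- (l, m) is a valid pair
    have hAx' : ((A (l, m) : ℤ) : ℝ) ≤ x' := by
      simp only [hAdef]; push_cast [Int.cast_max]
      refine max_le hxl.1 ?_
      have := hym.2; rw [hy'eq] at this; linarith
    have hBx' : x' ≤ ((B (l, m) : ℤ) : ℝ) := by
      simp only [hBdef]; push_cast [Int.cast_min]
      refine le_min hxl.2 ?_
      have := hym.1; rw [hy'eq] at this; linarith
    have hABlm : A (l, m) ≤ B (l, m) := by exact_mod_cast le_trans hAx' hBx'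
    have hmemF : ((l, m), false) ∈ C := by
      simp only [C, Finset.mem_product, Finset.mem_filter, Finset.mem_univ, true_and, and_true]
      exact hABlm
    have hmemT : ((l, m), true) ∈ C := by
      simp only [C, Finset.mem_product, Finset.mem_filter, Finset.mem_univ, true_and, and_true]
      exact hABlm
    have hminF := hmin _ hmemF
    have hminT := hmin _ hmemT
    have hepF : ep ((l, m), false) = A (l, m) := rfl
    have hepT : ep ((l, m), true) = B (l, m) := rfl
    have hbound : h c0.1 x0 ≤ h (l, m) x' := by
      have := haff (l, m) ((A (l, m) : ℝ)) ((B (l, m) : ℝ)) x' hAx' hBx'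
      rw [hepF] at hminF; rw [hepT] at hminT
      rcases min_cases (h (l, m) ((A (l, m) : ℤ) : ℝ)) (h (l, m) ((B (l, m) : ℤ) : ℝ)) with
        ⟨heq, _⟩ | ⟨heq, _⟩ <;> rw [heq] at this
      · exact le_trans hminF this
      · exact le_trans hminT this
    have hval : V x' + f y' = h (l, m) x' := by
      simp only [hhdef]; rw [hVx, hfy, hy'eq]
    rw [hval]
    exact le_trans hstep1 hbound
end

section
/- Let K ≥ 1, let v, w : {1, ..., K} → ℝ with v_k ≥ 0 and w_k > 0 for all k, and let W ≥ 0. Then sup { Σ_{k : z_k ≥ w_k} v_k : z : {1,...,K} → ℝ, z_k ≥ 0 for all k, Σ_k z_k ≤ W } = max { Σ_{k ∈ S} v_k : S ⊆ {1,...,K}, Σ_{k ∈ S} w_k ≤ W }, and the supremum is attained. -/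
open scoped Classical

/-- Knapsack reduction with threshold profits: the supremum, over nonnegative
`z` with `∑ z_k ≤ W`, of the sum of the values `v_k` of the items whose
threshold `w_k` is reached (`z_k ≥ w_k`), equals the optimal value of the 0-1
knapsack problem with values `v`, weights `w` and capacity `W`, and both
suprema are attained. -/
theorem stmt_11 (K : ℕ) (hK : 1 ≤ K) (v w : ℕ → ℝ)
    (hv : ∀ k ∈ Finset.Icc 1 K, 0 ≤ v k) (hw : ∀ k ∈ Finset.Icc 1 K, 0 < w k)
    (W : ℝ) (hW : 0 ≤ W) :
    sSup {t : ℝ | ∃ z : ℕ → ℝ, (∀ k ∈ Finset.Icc 1 K, 0 ≤ z k) ∧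
        (∑ k ∈ Finset.Icc 1 K, z k) ≤ W ∧
        t = ∑ k ∈ (Finset.Icc 1 K).filter (fun k => w k ≤ z k), v k} =
      sSup {t : ℝ | ∃ S : Finset ℕ, S ⊆ Finset.Icc 1 K ∧
        (∑ k ∈ S, w k) ≤ W ∧ t = ∑ k ∈ S, v k} ∧
    sSup {t : ℝ | ∃ z : ℕ → ℝ, (∀ k ∈ Finset.Icc 1 K, 0 ≤ z k) ∧
        (∑ k ∈ Finset.Icc 1 K, z k) ≤ W ∧
        t = ∑ k ∈ (Finset.Icc 1 K).filter (fun k => w k ≤ z k), v k} ∈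
      {t : ℝ | ∃ z : ℕ → ℝ, (∀ k ∈ Finset.Icc 1 K, 0 ≤ z k) ∧
        (∑ k ∈ Finset.Icc 1 K, z k) ≤ W ∧
        t = ∑ k ∈ (Finset.Icc 1 K).filter (fun k => w k ≤ z k), v k} ∧
    sSup {t : ℝ | ∃ S : Finset ℕ, S ⊆ Finset.Icc 1 K ∧
        (∑ k ∈ S, w k) ≤ W ∧ t = ∑ k ∈ S, v k} ∈
      {t : ℝ | ∃ S : Finset ℕ, S ⊆ Finset.Icc 1 K ∧
        (∑ k ∈ S, w k) ≤ W ∧ t = ∑ k ∈ S, v k} := by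
  set A := {t : ℝ | ∃ z : ℕ → ℝ, (∀ k ∈ Finset.Icc 1 K, 0 ≤ z k) ∧
        (∑ k ∈ Finset.Icc 1 K, z k) ≤ W ∧
        t = ∑ k ∈ (Finset.Icc 1 K).filter (fun k => w k ≤ z k), v k} with hA
  set B := {t : ℝ | ∃ S : Finset ℕ, S ⊆ Finset.Icc 1 K ∧
        (∑ k ∈ S, w k) ≤ W ∧ t = ∑ k ∈ S, v k} with hB
  -- A = B
  have hAB : A = B := by
    ext t
    constructor
    · rintro ⟨z, hz0, hzW, rfl⟩
      refine ⟨(Finset.Icc 1 K).filter (fun k => w k ≤ z k), Finset.filter_subset _ _, ?_, rfl⟩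
      calc ∑ k ∈ (Finset.Icc 1 K).filter (fun k => w k ≤ z k), w k
          ≤ ∑ k ∈ (Finset.Icc 1 K).filter (fun k => w k ≤ z k), z k := by
            refine Finset.sum_le_sum fun k hk => ?_
            exact (Finset.mem_filter.mp hk).2
        _ ≤ ∑ k ∈ Finset.Icc 1 K, z k := by
            refine Finset.sum_le_sum_of_subset_of_nonneg (Finset.filter_subset _ _)
              fun k hk _ => hz0 k hk
        _ ≤ W := hzW
    · rintro ⟨S, hS, hSW, rfl⟩
      refine ⟨fun k => if k ∈ S then w k else 0, ?_, ?_, ?_⟩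
      · intro k hk
        by_cases h : k ∈ S <;> simp [h, (hw k hk).le]
      · calc ∑ k ∈ Finset.Icc 1 K, (if k ∈ S then w k else 0)
            = ∑ k ∈ S, w k := by
              rw [Finset.sum_ite_mem, Finset.inter_eq_right.mpr hS]
          _ ≤ W := hSW
      · congr 1
        ext k
        rw [Finset.mem_filter]
        constructor
        · intro hk
          exact ⟨hS hk, by simp [hk]⟩
        · rintro ⟨hk, hwk⟩
          by_cases h : k ∈ S
          · exact h
          · simp only [h, if_false] at hwk
            exact absurd hwk (not_le.mpr (hw k hk))
  -- B is the coe of a finite nonempty set, so sSup B ∈ B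
  have hBfin : B.Finite := by
    refine Set.Finite.subset
      ((Finset.Icc 1 K).powerset.image (fun S => ∑ k ∈ S, v k)).finite_toSet ?_
    rintro t ⟨S, hS, _, rfl⟩
    simp only [Finset.coe_image, Set.mem_image, Finset.mem_coe, Finset.mem_powerset]
    exact ⟨S, hS, rfl⟩
  have hBne : B.Nonempty := ⟨0, ∅, by simp [hW]⟩
  have hmem : sSup B ∈ B := hBne.csSup_mem hBfin
  refine ⟨by rw [hAB], ?_, hmem⟩
  rw [hAB]; exact hmem
end

section
/- Let K ≥ 1, let v, w : {1, ..., K} → ℝ with v_k ≥ 0 and w_k ≥ 0 for all k, and let W ≥ 0. Then sup { Σ_k v_k · z_k : z : {1,...,K} → ℝ, 0 ≤ z_k ≤ 1 for all k, Σ_{k : z_k > 0} w_k ≤ W } = max { Σ_{k ∈ S} v_k : S ⊆ {1,...,K}, Σ_{k ∈ S} w_k ≤ W }, and the supremum is attained at a binary vector z ∈ {0,1}^K. -/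
open scoped Classical

/-- Knapsack reduction with activation weights: the supremum, over `z` with
`0 ≤ z_k ≤ 1` and total activated weight `∑_{k : z_k > 0} w_k ≤ W`, of
`∑ v_k z_k`, equals the optimal value of the 0-1 knapsack problem with values
`v`, weights `w` and capacity `W`; the knapsack maximum is attained, and the
supremum is attained at a binary vector `z ∈ {0,1}^K`. -/
theorem stmt_12 (K : ℕ) (hK : 1 ≤ K) (v w : ℕ → ℝ)
    (hv : ∀ k ∈ Finset.Icc 1 K, 0 ≤ v k) (hw : ∀ k ∈ Finset.Icc 1 K, 0 ≤ w k)
    (W : ℝ) (hW : 0 ≤ W) :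
    sSup {t : ℝ | ∃ z : ℕ → ℝ, (∀ k ∈ Finset.Icc 1 K, 0 ≤ z k ∧ z k ≤ 1) ∧
        (∑ k ∈ (Finset.Icc 1 K).filter (fun k => 0 < z k), w k) ≤ W ∧
        t = ∑ k ∈ Finset.Icc 1 K, v k * z k} =
      sSup {t : ℝ | ∃ S : Finset ℕ, S ⊆ Finset.Icc 1 K ∧
        (∑ k ∈ S, w k) ≤ W ∧ t = ∑ k ∈ S, v k} ∧
    sSup {t : ℝ | ∃ S : Finset ℕ, S ⊆ Finset.Icc 1 K ∧
        (∑ k ∈ S, w k) ≤ W ∧ t = ∑ k ∈ S, v k} ∈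
      {t : ℝ | ∃ S : Finset ℕ, S ⊆ Finset.Icc 1 K ∧
        (∑ k ∈ S, w k) ≤ W ∧ t = ∑ k ∈ S, v k} ∧
    ∃ z : ℕ → ℝ, (∀ k, z k = 0 ∨ z k = 1) ∧
      (∀ k ∈ Finset.Icc 1 K, 0 ≤ z k ∧ z k ≤ 1) ∧
      (∑ k ∈ (Finset.Icc 1 K).filter (fun k => 0 < z k), w k) ≤ W ∧
      (∑ k ∈ Finset.Icc 1 K, v k * z k) =
        sSup {t : ℝ | ∃ z' : ℕ → ℝ, (∀ k ∈ Finset.Icc 1 K, 0 ≤ z' k ∧ z' k ≤ 1) ∧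
          (∑ k ∈ (Finset.Icc 1 K).filter (fun k => 0 < z' k), w k) ≤ W ∧
          t = ∑ k ∈ Finset.Icc 1 K, v k * z' k} := by
  set I := Finset.Icc 1 K with hI
  set A : Set ℝ := {t : ℝ | ∃ z : ℕ → ℝ, (∀ k ∈ I, 0 ≤ z k ∧ z k ≤ 1) ∧
      (∑ k ∈ I.filter (fun k => 0 < z k), w k) ≤ W ∧
      t = ∑ k ∈ I, v k * z k} with hA
  set B : Set ℝ := {t : ℝ | ∃ S : Finset ℕ, S ⊆ I ∧
      (∑ k ∈ S, w k) ≤ W ∧ t = ∑ k ∈ S, v k} with hB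
  -- B is finite and nonempty
  have hBfin : B.Finite := by
    apply Set.Finite.subset (Finset.finite_toSet (I.powerset.image (fun S => ∑ k ∈ S, v k)))
    rintro t ⟨S, hS, -, rfl⟩
    simp only [Finset.coe_image, Set.mem_image, Finset.mem_coe, Finset.mem_powerset]
    exact ⟨S, hS, rfl⟩
  have hBne : B.Nonempty := ⟨0, ∅, by simp [hW]⟩
  have hBbdd : BddAbove B := hBfin.bddAbove
  have hBmem : sSup B ∈ B := hBne.csSup_mem hBfin
  -- every element of A is dominated by an element of B
  have key : ∀ t ∈ A, ∃ s ∈ B, t ≤ s := by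
    rintro t ⟨z, hz, hwz, rfl⟩
    refine ⟨∑ k ∈ I.filter (fun k => 0 < z k), v k,
      ⟨I.filter (fun k => 0 < z k), Finset.filter_subset _ _, hwz, rfl⟩, ?_⟩
    have h1 : ∑ k ∈ I, v k * z k = ∑ k ∈ I.filter (fun k => 0 < z k), v k * z k := by
      refine (Finset.sum_filter_of_ne ?_).symm
      intro k hk hne
      rcases (hz k hk).1.lt_or_eq with h | h
      · exact h
      · exact absurd (by rw [← h, mul_zero]) hne
    rw [h1]
    apply Finset.sum_le_sum
    intro k hk
    have hkI := Finset.mem_filter.mp hk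
    calc v k * z k ≤ v k * 1 :=
          mul_le_mul_of_nonneg_left (hz k hkI.1).2 (hv k hkI.1)
      _ = v k := mul_one _
  have hAne : A.Nonempty := by
    refine ⟨0, fun _ => 0, fun k _ => ⟨le_refl 0, zero_le_one⟩, ?_, by simp⟩
    simp [hW]
  have hAbdd : BddAbove A := ⟨sSup B, fun t ht => by
    obtain ⟨s, hs, hts⟩ := key t ht
    exact hts.trans (le_csSup hBbdd hs)⟩
  have hsum : ∀ S : Finset ℕ, S ⊆ I →
      (∑ k ∈ I, v k * (fun k => if k ∈ S then (1:ℝ) else 0) k) = ∑ k ∈ S, v k := by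
    intro S hS
    rw [Finset.sum_congr rfl (fun k _ => by rw [mul_ite, mul_one, mul_zero]),
      Finset.sum_ite_mem, Finset.inter_eq_right.mpr hS]
  -- B ⊆ A via indicator
  have hBA : B ⊆ A := by
    rintro t ⟨S, hS, hwS, rfl⟩
    refine ⟨fun k => if k ∈ S then 1 else 0, fun k _ => ?_, ?_, ?_⟩
    · by_cases h : k ∈ S <;> simp [h]
    · have hfilt : I.filter (fun k => (0:ℝ) < if k ∈ S then 1 else 0) = S := by
        ext k
        simp only [Finset.mem_filter]
        constructor
        · rintro ⟨-, hk⟩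
          by_contra h
          simp [h] at hk
        · intro hk
          exact ⟨hS hk, by simp [hk]⟩
      rw [hfilt]; exact hwS
    · exact (hsum S hS).symm
  have hsup : sSup A = sSup B := by
    apply le_antisymm
    · apply csSup_le hAne
      intro t ht
      obtain ⟨s, hs, hts⟩ := key t ht
      exact hts.trans (le_csSup hBbdd hs)
    · exact csSup_le_csSup hAbdd hBne hBA
  refine ⟨hsup, hBmem, ?_⟩
  obtain ⟨S, hS, hwS, hSval⟩ := hBmem
  refine ⟨fun k => if k ∈ S then 1 else 0, fun k => by by_cases h : k ∈ S <;> simp [h],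
    fun k _ => by by_cases h : k ∈ S <;> simp [h], ?_, ?_⟩
  · have hfilt : I.filter (fun k => (0:ℝ) < if k ∈ S then 1 else 0) = S := by
      ext k
      simp only [Finset.mem_filter]
      constructor
      · rintro ⟨-, hk⟩
        by_contra h
        simp [h] at hk
      · intro hk
        exact ⟨hS hk, by simp [hk]⟩
    rw [hfilt]; exact hwS
  · rw [hsup, hSval]
    exact hsum S hS
end

section
/- Let K ≥ 1, let A : {1, ..., K} → ℝ with A_k > 0 for all k, and let B = (Σ_k A_k) / 2. Then the following are equivalent: (i) there exist a subset S ⊆ {1, ..., K} and z : S → ℝ with 0 ≤ z_k ≤ A_k for all k ∈ S, Σ_{k ∈ S} z_k = B, and Σ_{k ∈ S} (z_k − A_k) ≥ 0; (ii) there exists a subset Λ ⊆ {1, ..., K} with Σ_{k ∈ Λ} A_k = B. -/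
/-- Number partitioning reduction: with `A_k > 0` and `B = (∑ A_k)/2`, there exist
a subset `S` and loads `0 ≤ z_k ≤ A_k` (`k ∈ S`) with `∑_{k ∈ S} z_k = B` and
`∑_{k ∈ S} (z_k - A_k) ≥ 0` if and only if there is a subset `Λ` with
`∑_{k ∈ Λ} A_k = B`. -/
theorem stmt_13 (K : ℕ) (hK : 1 ≤ K) (A : ℕ → ℝ)
    (hA : ∀ k ∈ Finset.Icc 1 K, 0 < A k)
    (B : ℝ) (hB : B = (∑ k ∈ Finset.Icc 1 K, A k) / 2) :
    (∃ S : Finset ℕ, S ⊆ Finset.Icc 1 K ∧ ∃ z : ℕ → ℝ,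
        (∀ k ∈ S, 0 ≤ z k ∧ z k ≤ A k) ∧ (∑ k ∈ S, z k) = B ∧
        0 ≤ ∑ k ∈ S, (z k - A k)) ↔
      (∃ Λ : Finset ℕ, Λ ⊆ Finset.Icc 1 K ∧ (∑ k ∈ Λ, A k) = B) := by
  constructor
  · rintro ⟨S, hS, z, hz, hzB, hge⟩
    refine ⟨S, hS, ?_⟩
    have h1 : ∑ k ∈ S, A k ≤ ∑ k ∈ S, z k := by
      have := hge
      rw [Finset.sum_sub_distrib] at this
      linarith
    have h2 : ∑ k ∈ S, z k ≤ ∑ k ∈ S, A k :=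
      Finset.sum_le_sum fun k hk => (hz k hk).2
    linarith
  · rintro ⟨Λ, hΛ, hsum⟩
    exact ⟨Λ, hΛ, A, fun k hk => ⟨(hA k (hΛ hk)).le, le_refl _⟩, hsum, by simp⟩
end

section
/- Let n ≥ 2, let c_{ij} ∈ ℝ for 1 ≤ i < j ≤ n, let f_i : ℝ → ℝ and reals a_i ≤ 0 ≤ b_i for 1 ≤ i ≤ n, and let Q_max > 0. For 1 ≤ k ≤ n and q ∈ ℝ, define V_k(q) ∈ ℝ ∪ {+∞} as the infimum, over all m ≥ 1, all index sequences 1 = i_1 < i_2 < ... < i_m = k, and all y : {i_1, ..., i_m} → ℝ satisfying y_{i_l} ∈ [a_{i_l}, b_{i_l}] for each l, Σ_{l' ≤ l} y_{i_{l'}} ∈ [0, Q_max] for each l ≤ m, and Σ_{l=1}^{m} y_{i_l} = q, of the total cost Σ_{l=1}^{m-1} c_{i_l, i_{l+1}} + Σ_{l=1}^{m} f_{i_l}(y_{i_l}) (with infimum of the empty set equal to +∞). Then V_1(q) = f_1(q) for q ∈ [0, Q_max] ∩ [a_1, b_1] (and +∞ otherwise), and for every k with 2 ≤ k ≤ n and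 every q ∈ [0, Q_max]: V_k(q) = min_{1 ≤ j < k} inf { V_j(q − y) + c_{j,k} + f_k(y) : y ∈ [a_k, b_k], q − y ∈ [0, Q_max] }. -/
private lemma ereal_le_sInf_add {S : Set EReal} {x : EReal} {r : ℝ}
    (h : ∀ w ∈ S, x ≤ w + (r : EReal)) : x ≤ sInf S + (r : EReal) := by
  have h1 : x - (r : EReal) ≤ sInf S := by
    apply le_sInf
    intro w hw
    rw [EReal.sub_le_iff_le_add (by simp) (by simp)]
    exact h w hw
  calc x = x - (r : EReal) + r := by rw [EReal.sub_add_cancel]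
  _ ≤ sInf S + r := add_le_add_left h1 _

private lemma Iic_castSucc_eq {n : ℕ} (l : Fin n) :
    Finset.Iic (Fin.castSucc l) = Finset.image Fin.castSucc (Finset.Iic l) := by
  ext x
  simp only [Finset.mem_Iic, Finset.mem_image]
  constructor
  · intro hx
    have hx' : (x : ℕ) ≤ (l : ℕ) := by simpa [Fin.le_def] using hx
    refine ⟨⟨x.val, by omega⟩, by simp [Fin.le_def]; omega, by ext; simp⟩
  · rintro ⟨x', hx', rfl⟩
    simp only [Fin.le_def, Fin.coe_castSucc] at *
    omega

private lemma sum_Iic_castSucc {n : ℕ} (g : Fin (n + 1) → ℝ) (l : Fin n) :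
    ∑ l' ∈ Finset.Iic (Fin.castSucc l), g l' = ∑ l' ∈ Finset.Iic l, g (Fin.castSucc l') := by
  rw [Iic_castSucc_eq, Finset.sum_image]
  intro x _ y _ h
  exact Fin.castSucc_injective _ h

private lemma strictMono_snoc {m : ℕ} {i : Fin (m + 1) → ℕ} (hi : StrictMono i) {k : ℕ}
    (hk : i (Fin.last m) < k) : StrictMono (Fin.snoc i k) := by
  intro p q hpq
  induction q using Fin.lastCases with
  | last =>
    induction p using Fin.lastCases with
    | last => exact absurd hpq (lt_irrefl _)
    | cast p =>
      rw [Fin.snoc_castSucc, Fin.snoc_last]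
      exact lt_of_le_of_lt (hi.monotone (Fin.le_last p)) hk
  | cast q =>
    induction p using Fin.lastCases with
    | last =>
      exact absurd hpq (Fin.castSucc_lt_last q).asymm
    | cast p =>
      rw [Fin.snoc_castSucc, Fin.snoc_castSucc]
      exact hi (Fin.castSucc_lt_castSucc_iff.mp hpq)

/-- Dynamic programming recurrence for the ARELTP value functions without duration
constraint: `V k q` is the infimum (in `ℝ ∪ {+∞}`) over all subsequences
`1 = i₁ < i₂ < ⋯ < i_m = k` and feasible inventory changes `y` (pointwise bounds,
running load in `[0, Qmax]`, final load `q`) of the arc costs plus profit-change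
values. Then `V 1 q = f 1 q` on `[0, Qmax] ∩ [a 1, b 1]` (and `+∞` otherwise), and
for `2 ≤ k ≤ n` and `q ∈ [0, Qmax]`,
`V k q = min_{1 ≤ j < k} inf_y { V j (q - y) + c j k + f k y }`. -/
theorem stmt_14 (n : ℕ) (hn : 2 ≤ n) (c : ℕ → ℕ → ℝ) (f : ℕ → ℝ → ℝ)
    (a b : ℕ → ℝ) (hab : ∀ i, 1 ≤ i → i ≤ n → a i ≤ 0 ∧ 0 ≤ b i)
    (Qmax : ℝ) (hQ : 0 < Qmax)
    (V : ℕ → ℝ → EReal)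
    (hV : ∀ k q, V k q = sInf {z : EReal |
      ∃ m : ℕ, ∃ i : Fin (m + 1) → ℕ, StrictMono i ∧ i 0 = 1 ∧ i (Fin.last m) = k ∧
        ∃ y : Fin (m + 1) → ℝ,
          (∀ l, y l ∈ Set.Icc (a (i l)) (b (i l))) ∧
          (∀ l, (∑ l' ∈ Finset.Iic l, y l') ∈ Set.Icc (0 : ℝ) Qmax) ∧
          (∑ l, y l) = q ∧
          z = (((∑ l : Fin m, c (i l.castSucc) (i l.succ)) +
                ∑ l, f (i l) (y l) : ℝ) : EReal)}) :
    (∀ q : ℝ,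
      (q ∈ Set.Icc (0 : ℝ) Qmax ∩ Set.Icc (a 1) (b 1) → V 1 q = ((f 1 q : ℝ) : EReal)) ∧
      (q ∉ Set.Icc (0 : ℝ) Qmax ∩ Set.Icc (a 1) (b 1) → V 1 q = ⊤)) ∧
    (∀ k, 2 ≤ k → k ≤ n → ∀ q ∈ Set.Icc (0 : ℝ) Qmax,
      V k q = sInf {z : EReal | ∃ j, 1 ≤ j ∧ j < k ∧
        ∃ y ∈ Set.Icc (a k) (b k), q - y ∈ Set.Icc (0 : ℝ) Qmax ∧
          z = V j (q - y) + ((c j k : ℝ) : EReal) + ((f k y : ℝ) : EReal)}) := by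
  constructor
  · intro q
    -- characterize membership for k = 1
    have hchar : ∀ z : EReal, (∃ m : ℕ, ∃ i : Fin (m + 1) → ℕ,
        StrictMono i ∧ i 0 = 1 ∧ i (Fin.last m) = 1 ∧
        ∃ y : Fin (m + 1) → ℝ,
          (∀ l, y l ∈ Set.Icc (a (i l)) (b (i l))) ∧
          (∀ l, (∑ l' ∈ Finset.Iic l, y l') ∈ Set.Icc (0 : ℝ) Qmax) ∧
          (∑ l, y l) = q ∧
          z = (((∑ l : Fin m, c (i l.castSucc) (i l.succ)) +
                ∑ l, f (i l) (y l) : ℝ) : EReal)) ↔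
        (q ∈ Set.Icc (0 : ℝ) Qmax ∩ Set.Icc (a 1) (b 1) ∧ z = ((f 1 q : ℝ) : EReal)) := by
      intro z
      constructor
      · rintro ⟨m, i, hmono, h0, hlast, y, hy, hpart, htot, hz⟩
        have hm : m = 0 := by
          by_contra h
          have h01 : (0 : Fin (m + 1)) < Fin.last m := by
            rw [Fin.lt_def]; simp [Fin.last]; omega
          have := hmono h01
          rw [h0, hlast] at this
          exact lt_irrefl _ this
        subst hm
        have hy0 : y 0 = q := by simpa using htot
        have hpart0 := hpart 0
        have hIic : Finset.Iic (0 : Fin 1) = {0} := by decide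
        rw [hIic] at hpart0
        simp only [Finset.sum_singleton, hy0] at hpart0
        have hy0' := hy 0
        rw [h0, hy0] at hy0'
        refine ⟨⟨hpart0, hy0'⟩, ?_⟩
        rw [hz]
        congr 1
        simp [h0, hy0]
      · rintro ⟨⟨hq1, hq2⟩, hz⟩
        refine ⟨0, fun _ => 1, fun p q' h => absurd h (by omega),
          rfl, rfl, fun _ => q, ?_, ?_, ?_, ?_⟩
        · intro l; exact hq2
        · intro l
          have hIic : Finset.Iic l = {0} := by
            have : l = 0 := by omega
            subst this; decide
          rw [hIic]; simpa using hq1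
        · simp
        · rw [hz]; norm_num
    constructor
    · intro hq
      rw [hV]
      have : {z : EReal | ∃ m : ℕ, ∃ i : Fin (m + 1) → ℕ,
          StrictMono i ∧ i 0 = 1 ∧ i (Fin.last m) = 1 ∧
          ∃ y : Fin (m + 1) → ℝ,
            (∀ l, y l ∈ Set.Icc (a (i l)) (b (i l))) ∧
            (∀ l, (∑ l' ∈ Finset.Iic l, y l') ∈ Set.Icc (0 : ℝ) Qmax) ∧
            (∑ l, y l) = q ∧
            z = (((∑ l : Fin m, c (i l.castSucc) (i l.succ)) +
                  ∑ l, f (i l) (y l) : ℝ) : EReal)} = {((f 1 q : ℝ) : EReal)} := by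
        ext z
        rw [Set.mem_setOf_eq, hchar z, Set.mem_singleton_iff]
        simp [hq]
      rw [this, sInf_singleton]
    · intro hq
      rw [hV]
      have : {z : EReal | ∃ m : ℕ, ∃ i : Fin (m + 1) → ℕ,
          StrictMono i ∧ i 0 = 1 ∧ i (Fin.last m) = 1 ∧
          ∃ y : Fin (m + 1) → ℝ,
            (∀ l, y l ∈ Set.Icc (a (i l)) (b (i l))) ∧
            (∀ l, (∑ l' ∈ Finset.Iic l, y l') ∈ Set.Icc (0 : ℝ) Qmax) ∧
            (∑ l, y l) = q ∧
            z = (((∑ l : Fin m, c (i l.castSucc) (i l.succ)) +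
                  ∑ l, f (i l) (y l) : ℝ) : EReal)} = (∅ : Set EReal) := by
        ext z
        rw [Set.mem_setOf_eq, hchar z]
        simp [hq]
      rw [this, sInf_empty]
  · intro k hk2 hkn q hq
    rw [hV]
    apply le_antisymm
    · -- sInf A ≤ sInf B
      apply le_sInf
      rintro e ⟨j, hj1, hjk, y, hy, hqy, he⟩
      rw [he, hV j (q - y), add_assoc, ← EReal.coe_add]
      apply ereal_le_sInf_add
      rintro w ⟨m, i, hmono, h0, hlast, yv, hyv, hpart, htot, hz⟩
      apply sInf_le
      refine ⟨m + 1, Fin.snoc i k, strictMono_snoc hmono (hlast ▸ hjk), ?_, ?_,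
        Fin.snoc yv y, ?_, ?_, ?_, ?_⟩
      · have h00 : (0 : Fin (m + 1 + 1)) = Fin.castSucc 0 := rfl
        rw [h00, Fin.snoc_castSucc]; exact h0
      · simp
      · intro l
        induction l using Fin.lastCases with
        | last => simp only [Fin.snoc_last]; exact hy
        | cast l => simp only [Fin.snoc_castSucc]; exact hyv l
      · intro l
        induction l using Fin.lastCases with
        | last =>
          rw [show Finset.Iic (Fin.last (m + 1)) = Finset.univ from by
            ext x; simp [Fin.le_last]]
          rw [Fin.sum_univ_castSucc]
          simp only [Fin.snoc_castSucc, Fin.snoc_last, htot]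
          simpa using hq
        | cast l =>
          rw [sum_Iic_castSucc]
          simp only [Fin.snoc_castSucc]
          exact hpart l
      · rw [Fin.sum_univ_castSucc]
        simp only [Fin.snoc_castSucc, Fin.snoc_last, htot]
        ring
      · have harc : ∑ l : Fin (m + 1), c (Fin.snoc (α := fun _ : Fin (m + 1 + 1) => ℕ) i k l.castSucc)
              (Fin.snoc (α := fun _ : Fin (m + 1 + 1) => ℕ) i k l.succ)
            = (∑ l : Fin m, c (i l.castSucc) (i l.succ)) + c j k := by
          rw [Fin.sum_univ_castSucc]
          simp only [Fin.succ_castSucc, Fin.snoc_castSucc, Fin.succ_last, Fin.snoc_last, hlast]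
        have hfs : ∑ l : Fin (m + 1 + 1), f (Fin.snoc (α := fun _ : Fin (m + 1 + 1) => ℕ) i k l)
              (Fin.snoc (α := fun _ : Fin (m + 1 + 1) => ℝ) yv y l)
            = (∑ l : Fin (m + 1), f (i l) (yv l)) + f k y := by
          rw [Fin.sum_univ_castSucc]
          simp only [Fin.snoc_castSucc, Fin.snoc_last]
        rw [hz, ← EReal.coe_add, EReal.coe_eq_coe_iff, harc, hfs]
        ring
    · -- sInf B ≤ sInf A
      apply le_sInf
      rintro z ⟨m, i, hmono, h0, hlast, y, hy, hpart, htot, hz⟩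
      have hm : m ≠ 0 := by
        rintro rfl
        rw [show Fin.last 0 = 0 from rfl, h0] at hlast
        omega
      obtain ⟨m', rfl⟩ : ∃ m', m = m' + 1 := ⟨m - 1, by omega⟩
      set j := i ((Fin.last m').castSucc) with hj
      set ylast := y (Fin.last (m' + 1)) with hylast
      have hsum' : ∑ l' ∈ Finset.Iic ((Fin.last m').castSucc), y l' = q - ylast := by
        rw [sum_Iic_castSucc]
        rw [show Finset.Iic (Fin.last m') = Finset.univ from by ext x; simp [Fin.le_last]]
        rw [← htot, Fin.sum_univ_castSucc (f := y), hylast]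
        ring
      have hqy : q - ylast ∈ Set.Icc (0 : ℝ) Qmax := hsum' ▸ hpart ((Fin.last m').castSucc)
      have hj1 : 1 ≤ j := h0 ▸ hmono.monotone (Fin.zero_le _)
      have hjk : j < k := hlast ▸ hmono (Fin.castSucc_lt_last (Fin.last m'))
      have hyb : ylast ∈ Set.Icc (a k) (b k) := by
        have := hy (Fin.last (m' + 1)); rwa [hlast] at this
      set wr : ℝ := (∑ l : Fin m', c (i l.castSucc.castSucc) (i l.succ.castSucc)) +
        ∑ l : Fin (m' + 1), f (i l.castSucc) (y l.castSucc) with hwr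
      have hVj : V j (q - ylast) ≤ ((wr : ℝ) : EReal) := by
        rw [hV]
        apply sInf_le
        refine ⟨m', fun l => i l.castSucc, hmono.comp Fin.strictMono_castSucc, h0, rfl,
          fun l => y l.castSucc, fun l => hy l.castSucc, ?_, ?_, ?_⟩
        · intro l
          rw [← sum_Iic_castSucc]
          exact hpart l.castSucc
        · rw [show (Finset.univ : Finset (Fin (m' + 1))) = Finset.Iic (Fin.last m') from by
            ext x; simp [Fin.le_last]]
          rw [← sum_Iic_castSucc]
          exact hsum'
        · rfl
      have hzval : z = ((wr : ℝ) : EReal) + ((c j k : ℝ) : EReal) + ((f k ylast : ℝ) : EReal) := by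
        have harc : ∑ l : Fin (m' + 1), c (i l.castSucc) (i l.succ)
            = (∑ l : Fin m', c (i l.castSucc.castSucc) (i l.succ.castSucc)) + c j k := by
          rw [Fin.sum_univ_castSucc]
          simp only [Fin.succ_castSucc, Fin.succ_last, hlast, ← hj]
        have hfs : ∑ l : Fin (m' + 1 + 1), f (i l) (y l)
            = (∑ l : Fin (m' + 1), f (i l.castSucc) (y l.castSucc)) + f k ylast := by
          rw [Fin.sum_univ_castSucc]
          simp only [hlast, ← hylast]
        rw [hz, ← EReal.coe_add, ← EReal.coe_add, EReal.coe_eq_coe_iff, harc, hfs, hwr]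
        ring
      calc sInf {z : EReal | ∃ j, 1 ≤ j ∧ j < k ∧
          ∃ y ∈ Set.Icc (a k) (b k), q - y ∈ Set.Icc (0 : ℝ) Qmax ∧
            z = V j (q - y) + ((c j k : ℝ) : EReal) + ((f k y : ℝ) : EReal)}
          ≤ V j (q - ylast) + ((c j k : ℝ) : EReal) + ((f k ylast : ℝ) : EReal) :=
            sInf_le ⟨j, hj1, hjk, ylast, hyb, hqy, rfl⟩
        _ ≤ z := by
            rw [hzval]
            exact add_le_add_left (add_le_add_left hVj _) _
end

section
/- Let N ≥ 1 and M ≥ 1, and for each i ∈ {1, ..., N} let a_{i,1} < a_{i,2} < ... < a_{i,M} be reals with a_{i,j} ∈ [j−1, j) for each j. For each i define f_i on [0, a_{i,M}] by f_i(y) = min { a_{i,j'} : 1 ≤ j' ≤ M, a_{i,j'} ≥ y }. Then for every j ∈ {1, ..., M} and every y ∈ [j−1, j) such that a_{i,j} ≥ y for at least one i: min_{i : y ≤ a_{i,M}} f_i(y) = min { a_{i,j} : 1 ≤ i ≤ N, a_{i,j} ≥ y }. -/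
/-- Reduction of sorting `M` sets of `N` numbers to a lower-envelope computation:
with `a i 1 < ⋯ < a i M` and `a i j ∈ [j-1, j)`, and `f i y` defined on
`[0, a i M]` as the smallest `a i j'` that is at least `y`, on each interval
`[j-1, j)` the lower envelope `min_{i : y ≤ a i M} f i y` equals
`min { a i j : a i j ≥ y }` (whenever the latter set is nonempty). -/
theorem stmt_15 (N M : ℕ) (hN : 1 ≤ N) (hM : 1 ≤ M) (a : ℕ → ℕ → ℝ)
    (hmono : ∀ i ∈ Finset.Icc 1 N, ∀ j ∈ Finset.Icc 1 M, ∀ j' ∈ Finset.Icc 1 M,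
      j < j' → a i j < a i j')
    (hrange : ∀ i ∈ Finset.Icc 1 N, ∀ j ∈ Finset.Icc 1 M,
      a i j ∈ Set.Ico ((j : ℝ) - 1) (j : ℝ))
    (f : ℕ → ℝ → ℝ)
    (hf : ∀ i ∈ Finset.Icc 1 N, ∀ y ∈ Set.Icc (0 : ℝ) (a i M),
      IsLeast {z : ℝ | ∃ j' ∈ Finset.Icc 1 M, y ≤ a i j' ∧ z = a i j'} (f i y))
    (j : ℕ) (hj : j ∈ Finset.Icc 1 M) (y : ℝ) (hy : y ∈ Set.Ico ((j : ℝ) - 1) (j : ℝ))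
    (hex : ∃ i ∈ Finset.Icc 1 N, y ≤ a i j) :
    sInf {z : ℝ | ∃ i ∈ Finset.Icc 1 N, y ≤ a i M ∧ z = f i y} =
      sInf {z : ℝ | ∃ i ∈ Finset.Icc 1 N, y ≤ a i j ∧ z = a i j} := by
  obtain ⟨hj1, hjM⟩ := Finset.mem_Icc.mp hj
  obtain ⟨hy1, hy2⟩ := hy
  obtain ⟨i0, hi0, hyi0⟩ := hex
  have hjpos : (0:ℝ) ≤ (j:ℝ) - 1 := by
    have : (1:ℝ) ≤ j := by exact_mod_cast hj1
    linarith
  have hy0 : (0:ℝ) ≤ y := le_trans hjpos hy1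
  have hMmem : M ∈ Finset.Icc 1 M := by simp [hM]
  have hjM' : ∀ i ∈ Finset.Icc 1 N, a i j ≤ a i M := by
    intro i hi
    rcases eq_or_lt_of_le hjM with h | h
    · rw [h]
    · exact le_of_lt (hmono i hi j hj M hMmem h)
  have key : ∀ i ∈ Finset.Icc 1 N, y ≤ a i M →
      (y ≤ a i j → f i y = a i j) ∧ (a i j < y → (j:ℝ) ≤ f i y) := by
    intro i hi hyM
    obtain ⟨hmem, hlb⟩ := hf i hi y ⟨hy0, hyM⟩
    obtain ⟨j'', hj'', hyj'', hfeq⟩ := hmem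
    have hj''ge : j ≤ j'' := by
      by_contra hlt
      push_neg at hlt
      have h1 := (hrange i hi j'' hj'').2
      have h2 : (j'':ℝ) ≤ (j:ℝ) - 1 := by
        have h3 : j'' + 1 ≤ j := hlt
        have h4 := (Nat.cast_le (α := ℝ)).mpr h3
        push_cast at h4
        linarith
      linarith
    constructor
    · intro hyj
      apply le_antisymm
      · exact hlb ⟨j, hj, hyj, rfl⟩
      · rw [hfeq]
        rcases eq_or_lt_of_le hj''ge with h | h
        · rw [h]
        · exact le_of_lt (hmono i hi j hj j'' hj'' h)
    · intro hlt2
      have hne : j ≠ j'' := by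
        rintro rfl; exact absurd hyj'' (not_le.mpr hlt2)
      have hgt : j < j'' := lt_of_le_of_ne hj''ge hne
      have h1 := (hrange i hi j'' hj'').1
      have h2 : (j:ℝ) ≤ (j'':ℝ) - 1 := by
        have h3 : j + 1 ≤ j'' := hgt
        have h4 := (Nat.cast_le (α := ℝ)).mpr h3
        push_cast at h4
        linarith
      rw [hfeq]; linarith
  set S := {z : ℝ | ∃ i ∈ Finset.Icc 1 N, y ≤ a i M ∧ z = f i y} with hS
  set T := {z : ℝ | ∃ i ∈ Finset.Icc 1 N, y ≤ a i j ∧ z = a i j} with hT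
  have hSfin : S.Finite := by
    apply Set.Finite.subset (Set.finite_range (fun i : Finset.Icc 1 N => f i y))
    rintro z ⟨i, hi, _, rfl⟩
    exact ⟨⟨i, hi⟩, rfl⟩
  have hTfin : T.Finite := by
    apply Set.Finite.subset (Set.finite_range (fun i : Finset.Icc 1 N => a i j))
    rintro z ⟨i, hi, _, rfl⟩
    exact ⟨⟨i, hi⟩, rfl⟩
  have hTne : T.Nonempty := ⟨a i0 j, i0, hi0, hyi0, rfl⟩
  have hSne : S.Nonempty := ⟨f i0 y, i0, hi0, le_trans hyi0 (hjM' i0 hi0), rfl⟩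
  have hSbdd := hSfin.bddBelow
  have hTbdd := hTfin.bddBelow
  have hsub : T ⊆ S := by
    rintro z ⟨i, hi, hyj, rfl⟩
    have hyM := le_trans hyj (hjM' i hi)
    exact ⟨i, hi, hyM, ((key i hi hyM).1 hyj).symm⟩
  apply le_antisymm
  · exact csInf_le_csInf hSbdd hTne hsub
  · apply le_csInf hSne
    rintro z ⟨i, hi, hyM, rfl⟩
    rcases le_or_gt y (a i j) with h | h
    · rw [(key i hi hyM).1 h]
      exact csInf_le hTbdd ⟨i, hi, h, rfl⟩
    · have h1 := (key i hi hyM).2 h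
      have h2 : sInf T ≤ a i0 j := csInf_le hTbdd ⟨i0, hi0, hyi0, rfl⟩
      have h3 := (hrange i0 hi0 j hj).2
      linarith
end

section
/- Let a ≤ b and c ≤ d be reals, and let k₁, d₁, k₂, d₂ ∈ ℝ with k₁ ≤ k₂. Define F(q) = min { (k₁·x + d₁) + (k₂·y + d₂) : x ∈ [a, b], y ∈ [c, d], x + y = q } for q ∈ [a + c, b + d]. Then F(q) = k₁·(q − c) + d₁ + k₂·c + d₂ for q ∈ [a + c, b + c], and F(q) = k₁·b + d₁ + k₂·(q − b) + d₂ for q ∈ [b + c, b + d]. -/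
/-- Closed form of the superposition (infimal convolution) of two affine segments
`x ↦ k₁ x + d₁` on `[a, b]` and `y ↦ k₂ y + d₂` on `[c, d]` with `k₁ ≤ k₂`: on
`[a + c, b + c]` it equals `k₁ (q - c) + d₁ + k₂ c + d₂`, and on `[b + c, b + d]`
it equals `k₁ b + d₁ + k₂ (q - b) + d₂`. -/
theorem stmt_16 (a b c d k₁ d₁ k₂ d₂ : ℝ) (hab : a ≤ b) (hcd : c ≤ d) (hk : k₁ ≤ k₂)
    (F : ℝ → ℝ)
    (hF : ∀ q ∈ Set.Icc (a + c) (b + d),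
      F q = sInf {z : ℝ | ∃ x ∈ Set.Icc a b, ∃ y ∈ Set.Icc c d,
        x + y = q ∧ z = (k₁ * x + d₁) + (k₂ * y + d₂)}) :
    (∀ q ∈ Set.Icc (a + c) (b + c), F q = k₁ * (q - c) + d₁ + k₂ * c + d₂) ∧
    (∀ q ∈ Set.Icc (b + c) (b + d), F q = k₁ * b + d₁ + k₂ * (q - b) + d₂) := by
  constructor
  · rintro q ⟨hq1, hq2⟩
    rw [hF q ⟨hq1, le_trans hq2 (by linarith)⟩]
    have hmem : (k₁ * (q - c) + d₁ + k₂ * c + d₂) ∈ {z : ℝ | ∃ x ∈ Set.Icc a b,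
        ∃ y ∈ Set.Icc c d, x + y = q ∧ z = (k₁ * x + d₁) + (k₂ * y + d₂)} :=
      ⟨q - c, ⟨by linarith, by linarith⟩, c, ⟨le_refl c, hcd⟩, by ring, by ring⟩
    have hlb : ∀ z ∈ {z : ℝ | ∃ x ∈ Set.Icc a b, ∃ y ∈ Set.Icc c d,
        x + y = q ∧ z = (k₁ * x + d₁) + (k₂ * y + d₂)},
        k₁ * (q - c) + d₁ + k₂ * c + d₂ ≤ z := by
      rintro z ⟨x, ⟨hx1, hx2⟩, y, ⟨hy1, hy2⟩, hxy, hz⟩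
      subst hxy
      have : z - (k₁ * (x + y - c) + d₁ + k₂ * c + d₂) = (k₂ - k₁) * (y - c) := by
        rw [hz]; ring
      nlinarith [mul_nonneg (sub_nonneg.mpr hk) (sub_nonneg.mpr hy1)]
    exact le_antisymm (csInf_le ⟨_, hlb⟩ hmem) (le_csInf ⟨_, hmem⟩ hlb)
  · rintro q ⟨hq1, hq2⟩
    rw [hF q ⟨le_trans (by linarith) hq1, hq2⟩]
    have hmem : (k₁ * b + d₁ + k₂ * (q - b) + d₂) ∈ {z : ℝ | ∃ x ∈ Set.Icc a b,
        ∃ y ∈ Set.Icc c d, x + y = q ∧ z = (k₁ * x + d₁) + (k₂ * y + d₂)} :=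
      ⟨b, ⟨hab, le_refl b⟩, q - b, ⟨by linarith, by linarith⟩, by ring, by ring⟩
    have hlb : ∀ z ∈ {z : ℝ | ∃ x ∈ Set.Icc a b, ∃ y ∈ Set.Icc c d,
        x + y = q ∧ z = (k₁ * x + d₁) + (k₂ * y + d₂)},
        k₁ * b + d₁ + k₂ * (q - b) + d₂ ≤ z := by
      rintro z ⟨x, ⟨hx1, hx2⟩, y, ⟨hy1, hy2⟩, hxy, hz⟩
      subst hxy
      have : z - (k₁ * b + d₁ + k₂ * (x + y - b) + d₂) = (k₂ - k₁) * (b - x) := by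
        rw [hz]; ring
      nlinarith [mul_nonneg (sub_nonneg.mpr hk) (sub_nonneg.mpr hx2)]
    exact le_antisymm (csInf_le ⟨_, hlb⟩ hmem) (le_csInf ⟨_, hmem⟩ hlb)
end
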